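/- arXiv:1511.05976 — 4 statements merged into one kernel-verified Lean document; each statement's English description precedes it below -/
import Mathlib

section
/- Let A be a finite-dimensional hereditary algebra over an algebraically closed field K. A sequence (X_1, ..., X_t) of A-modules is an exceptional sequence if and only if the completely ordered set X = {X_1, ..., X_t} is a stratifying system over A. -/
open CategoryTheory CategoryTheory.Limits

/-- All `A`-module homomorphisms from `X` to `Y` vanish, i.e. `Hom_A(X, Y) = 0`. -/
def homZero {A : Type} [Ring A] (X Y : ModuleCat.{0} A) : Prop := ∀ f : X ⟶ Y, f = 0

/-- `Ext¹_A(X, Y) = 0`, phrased as: every short exact sequence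
`0 ⟶ Y ⟶ E ⟶ X ⟶ 0` splits. -/
def ext1Zero {A : Type} [Ring A] (X Y : ModuleCat.{0} A) : Prop :=
  ∀ (E : ModuleCat.{0} A) (i : Y ⟶ E) (pr : E ⟶ X) (w : i ≫ pr = 0),
    (ShortComplex.mk i pr w).ShortExact → ∃ r : E ⟶ Y, i ≫ r = 𝟙 Y

/-- An `A`-module is indecomposable: it is nonzero, and in any biproduct
decomposition one of the summands vanishes. -/
def Indec {A : Type} [Ring A] (M : ModuleCat.{0} A) : Prop :=
  ¬ IsZero M ∧ ∀ N₁ N₂ : ModuleCat.{0} A, Nonempty (M ≅ N₁ ⊞ N₂) → IsZero N₁ ∨ IsZero N₂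

/-- Two sets of modules coincide up to isomorphism. -/
def SetIso {A : Type} [Ring A] (S₁ S₂ : Set (ModuleCat.{0} A)) : Prop :=
  (∀ X ∈ S₁, ∃ Y ∈ S₂, Nonempty (X ≅ Y)) ∧ ∀ Y ∈ S₂, ∃ X ∈ S₁, Nonempty (X ≅ Y)

/-- `0 ⟶ L ⟶ E ⟶ M ⟶ 0` (with maps `i`, `p`) is an almost split
(Auslander–Reiten) sequence: it is a non-split short exact sequence with
indecomposable end terms, every map `N ⟶ M` which is not a split epimorphism
factors through `p`, and every map `L ⟶ N` which is not a split monomorphism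
factors through `i`. -/
structure IsAlmostSplitSeq {A : Type} [Ring A] {L E M : ModuleCat.{0} A}
    (i : L ⟶ E) (p : E ⟶ M) : Prop where
  comp_zero : i ≫ p = 0
  shortExact : (ShortComplex.mk i p comp_zero).ShortExact
  not_split : ¬ ∃ s : M ⟶ E, s ≫ p = 𝟙 M
  indec_left : Indec L
  indec_right : Indec M
  lift_of_not_splitEpi : ∀ (N : ModuleCat.{0} A) (f : N ⟶ M),
    (¬ ∃ s : M ⟶ N, s ≫ f = 𝟙 M) → ∃ g : N ⟶ E, g ≫ p = f
  desc_of_not_splitMono : ∀ (N : ModuleCat.{0} A) (f : L ⟶ N),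
    (¬ ∃ r : N ⟶ L, f ≫ r = 𝟙 L) → ∃ g : E ⟶ N, i ≫ g = f

/-- `f : X ⟶ Y` is an irreducible morphism: it is neither a split monomorphism
nor a split epimorphism, and in any factorisation `f = g ≫ h` either `g` is a
split monomorphism or `h` is a split epimorphism. -/
def IrreducibleHom {A : Type} [Ring A] {X Y : ModuleCat.{0} A} (f : X ⟶ Y) : Prop :=
  (¬ ∃ r : Y ⟶ X, f ≫ r = 𝟙 X) ∧ (¬ ∃ s : Y ⟶ X, s ≫ f = 𝟙 Y) ∧
  ∀ (Z : ModuleCat.{0} A) (g : X ⟶ Z) (h : Z ⟶ Y), f = g ≫ h →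
    (∃ r : Z ⟶ X, g ≫ r = 𝟙 X) ∨ (∃ s : Y ⟶ Z, s ≫ h = 𝟙 Y)

/-- One step in the Auslander–Reiten quiver: either an isomorphism, or an
irreducible morphism between indecomposable modules. -/
def IrredStep {A : Type} [Ring A] (X Y : ModuleCat.{0} A) : Prop :=
  Nonempty (X ≅ Y) ∨ (Indec X ∧ Indec Y ∧ ∃ f : X ⟶ Y, IrreducibleHom f)

/-- `Y` is a successor of `X` in the Auslander–Reiten quiver: there is a (possibly
empty) path of irreducible morphisms between indecomposable modules from `X` to `Y`. -/
def IsSuccessor {A : Type} [Ring A] (X Y : ModuleCat.{0} A) : Prop :=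
  Relation.ReflTransGen IrredStep X Y

/-- The completely ordered family of modules `L = (X_1, …, X_t)` is a
stratifying system: each `X_i` is indecomposable, `Hom(X_j, X_i) = 0` for
`j > i` and `Ext¹(X_j, X_i) = 0` for `j ≥ i`. -/
def IsStratifyingSystem {A : Type} [Ring A] (L : List (ModuleCat.{0} A)) : Prop :=
  (∀ M ∈ L, Indec M) ∧
  (∀ i j : Fin L.length, i < j → homZero (L.get j) (L.get i)) ∧
  ∀ i j : Fin L.length, i ≤ j → ext1Zero (L.get j) (L.get i)

/-- The sequence `L = (X_1, …, X_t)` is an exceptional sequence: each `X_i` is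
exceptional (`End(X_i) ≅ K` and `Ext¹(X_i, X_i) = 0`), `Hom(X_i, X_j) = 0` for
`i > j` and `Ext¹(X_i, X_j) = 0` for `i ≥ j`. -/
def IsExceptionalSeq (K : Type) [Field K] {A : Type} [Ring A] [Algebra K A]
    (L : List (ModuleCat.{0} A)) : Prop :=
  (∀ M ∈ L, Nonempty ((End M) ≃ₐ[K] K) ∧ ext1Zero M M) ∧
  (∀ i j : Fin L.length, j < i → homZero (L.get i) (L.get j)) ∧
  ∀ i j : Fin L.length, j ≤ i → ext1Zero (L.get i) (L.get j)

/-- The arrow relation of the canonically oriented Euclidean quiver `Ã_{p,q}`: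
vertices `0, 1, …, p+q-1`, counterclockwise arrows `1 → 0, 2 → 1, …,
p-1 → p-2, p+q-1 → p-1` and clockwise arrows `p → 0, p+1 → p, …,
p+q-1 → p+q-2`.  `apqArrow p q a b` holds iff there is an arrow `a → b`. -/
def apqArrow (p q : ℕ) (a b : ℕ) : Prop :=
  (1 ≤ a ∧ a ≤ p - 1 ∧ b = a - 1) ∨
  (a = p + q - 1 ∧ b = p - 1) ∨
  (a = p ∧ b = 0) ∨
  (p + 1 ≤ a ∧ a ≤ p + q - 1 ∧ b = a - 1)

/-- The data of the hereditary path algebra `A = KÃ_{p,q}` of the canonically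
oriented Euclidean quiver `Ã_{p,q}`: a finite-dimensional hereditary `K`-algebra
together with a complete irredundant family `S v` (`v < p + q`) of simple
modules such that `Ext¹(S a, S b) ≠ 0` exactly when there is an arrow `a → b`
in `Ã_{p,q}` (this pins down the quiver of `A`, hence pins down `A` up to Morita
equivalence), and the indecomposable projective covers `P v` and injective
envelopes `I v` of the simple modules. -/
structure APQAlgebra (K : Type) [Field K] (p q : ℕ) where
  A : Type
  [ringA : Ring A]
  [algebraA : Algebra K A]
  findim : FiniteDimensional K A
  hereditary : ∀ J : Ideal A, Module.Projective A J
  S : ℕ → ModuleCat.{0} A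
  P : ℕ → ModuleCat.{0} A
  I : ℕ → ModuleCat.{0} A
  S_simple : ∀ v < p + q, IsSimpleModule A (S v)
  S_pairwise_noniso : ∀ v < p + q, ∀ w < p + q, Nonempty (S v ≅ S w) → v = w
  S_complete : ∀ M : ModuleCat.{0} A, IsSimpleModule A M → ∃ v < p + q, Nonempty (M ≅ S v)
  ext_simples : ∀ a < p + q, ∀ b < p + q, (¬ ext1Zero (S a) (S b) ↔ apqArrow p q a b)
  P_projective : ∀ v < p + q, Projective (P v)
  P_indec : ∀ v < p + q, Indec (P v)
  P_cover : ∀ v < p + q, ∃ f : P v ⟶ S v, Epi f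
  I_injective : ∀ v < p + q, Injective (I v)
  I_indec : ∀ v < p + q, Indec (I v)
  I_env : ∀ v < p + q, ∃ f : S v ⟶ I v, Mono f

attribute [instance] APQAlgebra.ringA APQAlgebra.algebraA

/-- The Auslander–Reiten translation `τ` and its inverse `τi = τ⁻` of a
finite-dimensional algebra, characterised by: `τ` vanishes on projectives,
`τi` vanishes on injectives, for an indecomposable non-projective `X` there is
an almost split sequence `0 ⟶ τX ⟶ E ⟶ X ⟶ 0`, and for an indecomposable
non-injective `X` there is an almost split sequence `0 ⟶ X ⟶ E ⟶ τ⁻X ⟶ 0`. -/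
structure ARTranslation (A : Type) [Ring A] where
  τ : ModuleCat.{0} A → ModuleCat.{0} A
  τi : ModuleCat.{0} A → ModuleCat.{0} A
  τ_proj : ∀ X, Projective X → IsZero (τ X)
  τ_almost_split : ∀ X, Indec X → ¬ Projective X →
    ∃ (E : ModuleCat.{0} A) (i : τ X ⟶ E) (pr : E ⟶ X), IsAlmostSplitSeq i pr
  τi_inj : ∀ X, Injective X → IsZero (τi X)
  τi_almost_split : ∀ X, Indec X → ¬ Injective X →
    ∃ (E : ModuleCat.{0} A) (i : X ⟶ E) (pr : E ⟶ τi X), IsAlmostSplitSeq i pr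

namespace APQAlgebra

variable {K : Type} [Field K] {p q : ℕ}

/-- The list `F = (F_1, …, F_{p-1})`, where `F_i = E_{p-i}^{(∞)} = S_{p-i}`. -/
def Flist (T : APQAlgebra K p q) : List (ModuleCat.{0} T.A) :=
  (List.range (p - 1)).map fun i => T.S (p - 1 - i)

/-- The list `G = (G_1, …, G_{q-1})`, where `G_j = E_{q-j}^{(0)} = S_{p+q-j-1}`. -/
def Glist (T : APQAlgebra K p q) : List (ModuleCat.{0} T.A) :=
  (List.range (q - 1)).map fun j => T.S (p + q - 2 - j)

/-- The set `F = {F_1, …, F_{p-1}}`, where `F_i = E_{p-i}^{(∞)} = S_{p-i}`. -/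
def Fset (T : APQAlgebra K p q) : Set (ModuleCat.{0} T.A) :=
  {M | ∃ i, 1 ≤ i ∧ i ≤ p - 1 ∧ M = T.S (p - i)}

/-- The set `G = {G_1, …, G_{q-1}}`, where `G_j = E_{q-j}^{(0)} = S_{p+q-j-1}`. -/
def Gset (T : APQAlgebra K p q) : Set (ModuleCat.{0} T.A) :=
  {M | ∃ j, 1 ≤ j ∧ j ≤ q - 1 ∧ M = T.S (p + q - j - 1)}

/-- The simple regular module `E_p^{(∞)}`; it satisfies `E_p^{(∞)} = τ E_1^{(∞)} = τ S_1`. -/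
def Epinf (T : APQAlgebra K p q) (tr : ARTranslation T.A) : ModuleCat.{0} T.A :=
  tr.τ (T.S 1)

/-- The simple regular module `E_q^{(0)}`; it satisfies `E_q^{(0)} = τ E_1^{(0)} = τ S_p`. -/
def E0q (T : APQAlgebra K p q) (tr : ARTranslation T.A) : ModuleCat.{0} T.A :=
  tr.τ (T.S p)

/-- A module is postprojective if it is isomorphic to some `τ⁻ᵗ P_v`. -/
def Postprojective (T : APQAlgebra K p q) (tr : ARTranslation T.A)
    (X : ModuleCat.{0} T.A) : Prop :=
  ∃ t v, v < p + q ∧ Nonempty (X ≅ tr.τi^[t] (T.P v))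

/-- A module is preinjective if it is isomorphic to some `τᵗ I_v`. -/
def Preinjective (T : APQAlgebra K p q) (tr : ARTranslation T.A)
    (X : ModuleCat.{0} T.A) : Prop :=
  ∃ t v, v < p + q ∧ Nonempty (X ≅ tr.τ^[t] (T.I v))

/-- An indecomposable module is regular if it is neither postprojective nor
preinjective. -/
def RegularM (T : APQAlgebra K p q) (tr : ARTranslation T.A)
    (X : ModuleCat.{0} T.A) : Prop :=
  Indec X ∧ ¬ T.Postprojective tr X ∧ ¬ T.Preinjective tr X

/-- The support of a module `M`: the set of vertices `v` such that the simple
`S v` occurs as a composition factor of `M`; equivalently (over the path algebra)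
`Hom(P_v, M) ≠ 0`. -/
def suppOf (T : APQAlgebra K p q) (M : ModuleCat.{0} T.A) : Set ℕ :=
  {v | v < p + q ∧ ¬ homZero (T.P v) M}

/-- The support of a set of modules. -/
def SuppSet (T : APQAlgebra K p q) (X : Set (ModuleCat.{0} T.A)) : Set ℕ :=
  {v | ∃ M ∈ X, v ∈ T.suppOf M}

/-- A module is sincere if every simple module occurs among its composition factors. -/
def Sincere (T : APQAlgebra K p q) (M : ModuleCat.{0} T.A) : Prop :=
  ∀ v < p + q, v ∈ T.suppOf M

end APQAlgebra
/-! ### Auxiliary material for the proof -/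

section StratAuxProj

variable {A : Type} [Ring A]

theorem auxStrat_proj_subsingleton (M : Type) [AddCommGroup M] [Module A M]
    [Subsingleton M] : Module.Projective A M :=
  ⟨⟨0, fun _ => Subsingleton.elim _ _⟩⟩

theorem auxStrat_proj_of_split {N M₁ : Type} [AddCommGroup N] [Module A N]
    [AddCommGroup M₁] [Module A M₁] (ρ : N →ₗ[A] M₁)
    (hker : Module.Projective A (LinearMap.ker ρ))
    (hrange : Module.Projective A (LinearMap.range ρ)) :
    Module.Projective A N := by
  haveI := hker; haveI := hrange
  obtain ⟨s, hs⟩ := Module.projective_lifting_property ρ.rangeRestrict LinearMap.id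
      (LinearMap.surjective_rangeRestrict ρ)
  have hρs : ∀ z : LinearMap.range ρ, ρ (s z) = (z : M₁) := by
    intro z
    have h1 : ρ.rangeRestrict (s z) = z := LinearMap.congr_fun hs z
    have h2 : (ρ.rangeRestrict (s z) : M₁) = ρ (s z) := rfl
    rw [← h2, h1]
  have hkmem : ∀ x : N, x - s (ρ.rangeRestrict x) ∈ LinearMap.ker ρ := by
    intro x
    rw [LinearMap.mem_ker, map_sub, hρs]
    simp [sub_eq_zero]
  let k : N →ₗ[A] LinearMap.ker ρ :=
    LinearMap.codRestrict _ (LinearMap.id - s ∘ₗ ρ.rangeRestrict) hkmem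
  refine Module.Projective.of_split
    (M := (LinearMap.ker ρ) × (LinearMap.range ρ))
    (LinearMap.prod k ρ.rangeRestrict)
    (LinearMap.coprod (LinearMap.ker ρ).subtype s) ?_
  ext x
  simp only [LinearMap.comp_apply, LinearMap.prod_apply, Pi.prod,
    LinearMap.coprod_apply, LinearMap.id_apply]
  show (x - s (ρ.rangeRestrict x)) + s (ρ.rangeRestrict x) = x
  abel

theorem auxStrat_proj_submodule_pi
    (hered : ∀ J : Ideal A, Module.Projective A J) :
    ∀ (n : ℕ) (N : Submodule A (Fin n → A)), Module.Projective A N := by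
  intro n
  induction n with
  | zero =>
    intro N
    haveI : Subsingleton (Fin 0 → A) := by infer_instance
    exact auxStrat_proj_subsingleton _
  | succ n ih =>
    intro N
    set ρ : N →ₗ[A] A := (LinearMap.proj 0) ∘ₗ N.subtype with hρ
    refine auxStrat_proj_of_split ρ ?_ (hered (LinearMap.range ρ))
    -- the kernel embeds into `Fin n → A`
    set τ : (LinearMap.ker ρ) →ₗ[A] (Fin n → A) :=
      LinearMap.pi (fun i => (LinearMap.proj i.succ) ∘ₗ N.subtype ∘ₗ (LinearMap.ker ρ).subtype)
      with hτdef
    have hτ : Function.Injective τ := by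
      intro x y hxy
      have hcoords : ∀ i : Fin n, ((x : N) : Fin (n+1) → A) i.succ
          = ((y : N) : Fin (n+1) → A) i.succ := by
        intro i
        have := congrFun hxy i
        simpa [hτdef, LinearMap.pi_apply] using this
      have h0 : ((x : N) : Fin (n+1) → A) 0 = ((y : N) : Fin (n+1) → A) 0 := by
        have hx0 : ρ x.1 = 0 := x.2
        have hy0 : ρ y.1 = 0 := y.2
        simp only [hρ, LinearMap.comp_apply, LinearMap.proj_apply,
          Submodule.subtype_apply] at hx0 hy0
        show ((x : N) : Fin (n+1) → A) 0 = ((y : N) : Fin (n+1) → A) 0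
        rw [show ((x : N) : Fin (n+1) → A) 0 = 0 from hx0,
          show ((y : N) : Fin (n+1) → A) 0 = 0 from hy0]
      apply Subtype.ext; apply Subtype.ext
      funext i
      rcases Fin.eq_zero_or_eq_succ i with h | ⟨i', rfl⟩
      · rw [h]; exact h0
      · exact hcoords i'
    haveI := ih (LinearMap.range τ)
    exact Module.Projective.of_equiv (LinearEquiv.ofInjective τ hτ).symm

end StratAuxProj
section StratAuxIndec

variable {A : Type} [Ring A]

theorem auxStrat_nontrivial_of_not_isZero {M : ModuleCat.{0} A} (h : ¬ IsZero M) :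
    Nontrivial M := by
  by_contra h'
  haveI : Subsingleton M := not_nontrivial_iff_subsingleton.mp h'
  exact h (ModuleCat.isZero_of_subsingleton M)

/-- For an indecomposable module, any idempotent endomorphism is `0` or `1`. -/
theorem auxStrat_idem_dichotomy {M : ModuleCat.{0} A} (hM : Indec M)
    (e : (M : Type) →ₗ[A] (M : Type)) (he : ∀ x, e (e x) = e x) :
    e = 0 ∨ e = LinearMap.id := by
  classical
  let N₁ : ModuleCat.{0} A := ModuleCat.of A (LinearMap.ker e)
  let N₂ : ModuleCat.{0} A := ModuleCat.of A (LinearMap.range e)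
  let d : (M : Type) →ₗ[A] (M : Type) := LinearMap.id - e
  have hd : ∀ x : M, d x = x - e x := fun _ => rfl
  have hf₁mem : ∀ x : M, d x ∈ LinearMap.ker e := by
    intro x
    simp only [LinearMap.mem_ker, hd, map_sub]
    rw [he]; abel
  let f₁ : M ⟶ N₁ := ModuleCat.ofHom (LinearMap.codRestrict _ d hf₁mem)
  let f₂ : M ⟶ N₂ := ModuleCat.ofHom e.rangeRestrict
  let g₁ : N₁ ⟶ M := ModuleCat.ofHom (LinearMap.ker e).subtype
  let g₂ : N₂ ⟶ M := ModuleCat.ofHom (LinearMap.range e).subtype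
  have hg₁f₁ : g₁ ≫ f₁ = 𝟙 N₁ := by
    ext x
    rcases x with ⟨x, hx⟩
    show x - e x = x
    rw [LinearMap.mem_ker.mp hx]; abel
  have hg₁f₂ : g₁ ≫ f₂ = 0 := by
    ext x
    rcases x with ⟨x, hx⟩
    show e x = 0
    exact LinearMap.mem_ker.mp hx
  have hg₂f₁ : g₂ ≫ f₁ = 0 := by
    ext x
    rcases x with ⟨x, hx⟩
    obtain ⟨y, hy⟩ := hx
    show x - e x = 0
    rw [← hy, he]; abel
  have hg₂f₂ : g₂ ≫ f₂ = 𝟙 N₂ := by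
    ext x
    rcases x with ⟨x, hx⟩
    obtain ⟨y, hy⟩ := hx
    show e x = x
    rw [← hy, he]
  have hφψ : biprod.lift f₁ f₂ ≫ biprod.desc g₁ g₂ = 𝟙 M := by
    rw [biprod.lift_desc]
    ext x
    show g₁ (f₁ x) + g₂ (f₂ x) = x
    show (x - e x) + e x = x
    abel
  have hψφ : biprod.desc g₁ g₂ ≫ biprod.lift f₁ f₂ = 𝟙 (N₁ ⊞ N₂) := by
    apply biprod.hom_ext' <;>
      [skip; skip] <;> apply biprod.hom_ext <;>
      simp only [Category.comp_id, Category.id_comp, Category.assoc,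
        biprod.lift_fst, biprod.lift_snd, biprod.inl_desc_assoc, biprod.inr_desc_assoc,
        biprod.inl_fst, biprod.inl_snd, biprod.inr_fst, biprod.inr_snd]
    · exact hg₁f₁
    · exact hg₁f₂
    · exact hg₂f₁
    · exact hg₂f₂
  have hiso : Nonempty (M ≅ N₁ ⊞ N₂) :=
    ⟨⟨biprod.lift f₁ f₂, biprod.desc g₁ g₂, hφψ, hψφ⟩⟩
  rcases hM.2 N₁ N₂ hiso with hz | hz
  · -- kernel is zero, so `e = id`
    right
    have hid : (𝟙 N₁ : N₁ ⟶ N₁) = 0 := hz.eq_of_src _ _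
    have hker : ∀ x : M, x ∈ LinearMap.ker e → x = 0 := by
      intro x hx
      have h1 : (𝟙 N₁ : N₁ ⟶ N₁) ⟨x, hx⟩ = (0 : N₁ ⟶ N₁) ⟨x, hx⟩ := by rw [hid]
      have h2 : (⟨x, hx⟩ : LinearMap.ker e) = 0 := h1
      simpa using congrArg Subtype.val h2
    ext x
    have h3 : x - e x = 0 := hker _ (hf₁mem x)
    have h4 : x = e x := sub_eq_zero.mp h3
    simpa using h4.symm
  · -- range is zero, so `e = 0`
    left
    have hid : (𝟙 N₂ : N₂ ⟶ N₂) = 0 := hz.eq_of_src _ _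
    ext x
    have hx : e x ∈ LinearMap.range e := ⟨x, rfl⟩
    have h1 : (𝟙 N₂ : N₂ ⟶ N₂) ⟨e x, hx⟩ = (0 : N₂ ⟶ N₂) ⟨e x, hx⟩ := by rw [hid]
    have h2 : (⟨e x, hx⟩ : LinearMap.range e) = 0 := h1
    simpa using congrArg Subtype.val h2

end StratAuxIndec
section StratAuxFitting

attribute [local instance] ModuleCat.moduleOfAlgebraModule
  ModuleCat.isScalarTower_of_algebra_moduleCat

/-- Fitting's dichotomy for endomorphisms of a finite-dimensional indecomposable module. -/
theorem auxStrat_fitting (K : Type) [Field K] {A : Type} [Ring A] [Algebra K A]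
    (M : ModuleCat.{0} A) [FiniteDimensional K (M : Type)]
    (hM : Indec M) (α : (M : Type) →ₗ[A] (M : Type)) :
    (∃ n, α ^ n = 0) ∨ Function.Bijective α := by
  classical
  set d := Module.finrank K (M : Type) with hd
  have hker_mono : ∀ i : ℕ, LinearMap.ker (α ^ i) ≤ LinearMap.ker (α ^ (i+1)) := by
    intro i x hx
    rw [LinearMap.mem_ker] at hx ⊢
    rw [pow_succ', Module.End.mul_apply, hx, map_zero]
  have hstab : ∃ i ≤ d, LinearMap.ker (α ^ (i+1)) ≤ LinearMap.ker (α ^ i) := by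
    by_contra hcon
    push_neg at hcon
    have hstrict : ∀ i ≤ d, (LinearMap.ker (α ^ i)).restrictScalars K
        < (LinearMap.ker (α ^ (i+1))).restrictScalars K := by
      intro i hi
      have hne : LinearMap.ker (α ^ i) ≠ LinearMap.ker (α ^ (i+1)) := by
        intro h
        exact hcon i hi (le_of_eq h.symm)
      refine lt_of_le_of_ne ?_ ?_
      · intro x hx
        rw [Submodule.restrictScalars_mem] at hx ⊢
        exact hker_mono i hx
      · intro h
        exact hne (Submodule.restrictScalars_injective K A (M : Type) h)
    have hle : ∀ i, i ≤ d + 1 →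
        i ≤ Module.finrank K ((LinearMap.ker (α ^ i)).restrictScalars K) := by
      intro i
      induction i with
      | zero => intro _; exact Nat.zero_le _
      | succ i ihh =>
        intro hi
        have h1 := ihh (le_trans (Nat.le_succ i) hi)
        have h2 : Module.finrank K ((LinearMap.ker (α ^ i)).restrictScalars K)
            < Module.finrank K ((LinearMap.ker (α ^ (i+1))).restrictScalars K) :=
          Submodule.finrank_lt_finrank_of_lt (hstrict i (by omega))
        omega
    have h3 := hle (d+1) le_rfl
    have h4 : Module.finrank K ((LinearMap.ker (α ^ (d+1))).restrictScalars K) ≤ d :=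
      hd ▸ Submodule.finrank_le _
    omega
  obtain ⟨i, hid, hstabi⟩ := hstab
  have hstab_eq : LinearMap.ker (α ^ (i+1)) = LinearMap.ker (α ^ i) :=
    le_antisymm hstabi (hker_mono i)
  have hstab_all : ∀ m : ℕ, LinearMap.ker (α ^ (i + m)) = LinearMap.ker (α ^ i) := by
    intro m
    induction m with
    | zero => rfl
    | succ m ihm =>
      apply le_antisymm
      · intro x hx
        rw [LinearMap.mem_ker] at hx
        have h1 : (α ^ (i+1)) ((α ^ m) x) = 0 := by
          rw [← Module.End.mul_apply, ← pow_add, show i + 1 + m = i + (m+1) from by omega]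
          exact hx
        have h2 : (α ^ i) ((α ^ m) x) = 0 := by
          have := hstab_eq.le (LinearMap.mem_ker.mpr h1)
          exact LinearMap.mem_ker.mp this
        rw [← ihm, LinearMap.mem_ker, pow_add, Module.End.mul_apply]
        exact h2
      · intro x hx
        have hx0 : (α ^ i) x = 0 := LinearMap.mem_ker.mp hx
        rw [LinearMap.mem_ker, show i + (m+1) = (m+1) + i from by omega, pow_add,
          Module.End.mul_apply, hx0, map_zero]
  set NN := i + 1 with hNN
  have hkerNN : ∀ m : ℕ, LinearMap.ker (α ^ (NN + m)) = LinearMap.ker (α ^ NN) := by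
    intro m
    have h1 := hstab_all (1 + m)
    have h2 := hstab_all 1
    rw [show i + (1 + m) = NN + m from by omega] at h1
    rw [show i + 1 = NN from rfl] at h2
    rw [h1, h2]
  set kk := LinearMap.ker (α ^ NN) with hkk
  set rr := LinearMap.range (α ^ NN) with hrr
  have hdisj : ∀ x, x ∈ kk → x ∈ rr → x = 0 := by
    intro x hxk hxr
    obtain ⟨y, hy⟩ := hxr
    have h1 : (α ^ (NN + NN)) y = 0 := by
      rw [pow_add, Module.End.mul_apply, hy]
      exact LinearMap.mem_ker.mp hxk
    have h2 : y ∈ LinearMap.ker (α ^ NN) := (hkerNN NN).le (LinearMap.mem_ker.mpr h1)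
    rw [← hy]
    exact LinearMap.mem_ker.mp h2
  -- dimension count over K
  set β := (α ^ NN).restrictScalars K with hβ
  have hβcoe : ∀ x, β x = (α ^ NN) x := fun _ => rfl
  have hkerβ : LinearMap.ker β = kk.restrictScalars K := by
    ext x
    simp only [LinearMap.mem_ker, Submodule.restrictScalars_mem, hβcoe, hkk]
  have hrangeβ : LinearMap.range β = rr.restrictScalars K := by
    ext x
    simp only [LinearMap.mem_range, Submodule.restrictScalars_mem, hβcoe, hrr]
  have hinfK : (kk.restrictScalars K) ⊓ (rr.restrictScalars K) = ⊥ := by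
    apply eq_bot_iff.mpr
    intro x hx
    rw [Submodule.mem_inf] at hx
    rw [Submodule.mem_bot]
    exact hdisj x (Submodule.restrictScalars_mem _ _ _ |>.mp hx.1)
      (Submodule.restrictScalars_mem _ _ _ |>.mp hx.2)
  have hrank := LinearMap.finrank_range_add_finrank_ker β
  have hsupinf := Submodule.finrank_sup_add_finrank_inf_eq
    (kk.restrictScalars K) (rr.restrictScalars K)
  rw [hinfK] at hsupinf
  have hfinsup : Module.finrank K
      ((kk.restrictScalars K) ⊔ (rr.restrictScalars K) : Submodule K (M : Type))
      = Module.finrank K (M : Type) := by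
    rw [hkerβ, hrangeβ] at hrank
    simp only [finrank_bot, add_zero] at hsupinf
    omega
  have hsupK : (kk.restrictScalars K) ⊔ (rr.restrictScalars K) = ⊤ :=
    Submodule.eq_top_of_finrank_eq hfinsup
  have hsup : kk ⊔ rr = ⊤ := by
    rw [← Submodule.restrictScalars_eq_top_iff (S := K)]
    apply eq_top_iff.mpr
    rw [← hsupK]
    apply sup_le
    · intro x hx
      rw [Submodule.restrictScalars_mem] at hx ⊢
      exact le_sup_left (α := Submodule A (M : Type)) hx
    · intro x hx
      rw [Submodule.restrictScalars_mem] at hx ⊢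
      exact le_sup_right (α := Submodule A (M : Type)) hx
  have hcompl : IsCompl rr kk := by
    constructor
    · rw [disjoint_iff]
      apply eq_bot_iff.mpr
      intro x hx
      rw [Submodule.mem_inf] at hx
      rw [Submodule.mem_bot]
      exact hdisj x hx.2 hx.1
    · rw [codisjoint_iff, sup_comm]
      exact hsup
  set pr := Submodule.projectionOnto rr kk hcompl with hpr
  set e : (M : Type) →ₗ[A] (M : Type) := rr.subtype ∘ₗ pr with he
  have he_apply : ∀ x, e x = (pr x : (M : Type)) := fun _ => rfl
  have he_left : ∀ z : rr, e (z : (M : Type)) = (z : (M : Type)) := by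
    intro z
    rw [he_apply, Submodule.projectionOnto_apply_left hcompl z]
  have he_idem : ∀ x, e (e x) = e x := by
    intro x
    exact he_left (pr x)
  rcases auxStrat_idem_dichotomy hM e he_idem with h0 | h1
  · left
    refine ⟨NN, ?_⟩
    ext x
    have h2 : e ((α ^ NN) x) = (α ^ NN) x := he_left ⟨(α ^ NN) x, ⟨x, rfl⟩⟩
    rw [h0] at h2
    simpa using h2.symm
  · right
    have hinj : Function.Injective α := by
      intro x y hxy
      have h2 : α (x - y) = 0 := by rw [map_sub, hxy, sub_self]
      have h3 : (α ^ NN) (x - y) = 0 := by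
        rw [hNN, pow_succ, Module.End.mul_apply, h2, map_zero]
      have h4 : e (x - y) = 0 := by
        rw [he_apply, Submodule.projectionOnto_apply_right hcompl
          ⟨x - y, LinearMap.mem_ker.mpr h3⟩]
        rfl
      rw [h1] at h4
      exact sub_eq_zero.mp h4
    have hsurj : Function.Surjective α := by
      have hinjK : Function.Injective (α.restrictScalars K) := hinj
      exact LinearMap.injective_iff_surjective.mp hinjK
    exact ⟨hinj, hsurj⟩

end StratAuxFitting
section StratAuxHR

attribute [local instance] ModuleCat.moduleOfAlgebraModule
  ModuleCat.isScalarTower_of_algebra_moduleCat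

/-- Key step (à la Happel–Ringel): over a hereditary algebra, an indecomposable
finitely generated module with no self-extensions admits no nonzero square-zero
endomorphism. -/
theorem auxStrat_happel_ringel (K : Type) [Field K] {A : Type} [Ring A] [Algebra K A]
    (hered : ∀ J : Ideal A, Module.Projective A J)
    (M : ModuleCat.{0} A) [Module.Finite A (M : Type)] [FiniteDimensional K (M : Type)]
    (hM : Indec M) (hext : ext1Zero M M)
    (f : (M : Type) →ₗ[A] (M : Type)) (hf2 : ∀ x, f (f x) = 0) (hf : f ≠ 0) : False := by
  classical
  set I := LinearMap.range f with hI
  set p : (M : Type) →ₗ[A] I := f.rangeRestrict with hp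
  have hp_surj : Function.Surjective p := f.surjective_rangeRestrict
  have hpval : ∀ x, ((p x : (M : Type))) = f x := fun _ => rfl
  set q : (M : Type) →ₗ[A] ((M : Type) ⧸ I) := I.mkQ with hq
  obtain ⟨n, φ₀, hφ₀⟩ := Module.Finite.exists_fin' A (M : Type)
  set g₀ : (Fin n → A) →ₗ[A] ((M : Type) ⧸ I) := q ∘ₗ φ₀ with hg₀def
  have hg₀ : Function.Surjective g₀ := by
    intro c
    obtain ⟨m, hm⟩ := Submodule.mkQ_surjective I c
    obtain ⟨y, hy⟩ := hφ₀ m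
    exact ⟨y, by simp [hg₀def, hy, hm, hq]⟩
  set Ω := LinearMap.ker g₀ with hΩ
  have hΩproj : Module.Projective A Ω := auxStrat_proj_submodule_pi hered n Ω
  have hhmem : ∀ w : Ω, φ₀ ((w : Fin n → A)) ∈ I := by
    intro w
    have hw : g₀ (w : Fin n → A) = 0 := LinearMap.mem_ker.mp w.2
    have hw2 : Submodule.Quotient.mk (φ₀ (w : Fin n → A)) = (0 : (M : Type) ⧸ I) := hw
    exact (Submodule.Quotient.mk_eq_zero I).mp hw2
  set h : Ω →ₗ[A] I :=
    LinearMap.codRestrict I (φ₀ ∘ₗ Ω.subtype) (fun w => hhmem w) with hh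
  haveI := hΩproj
  obtain ⟨h', hh'⟩ := Module.projective_lifting_property p h hp_surj
  have hkey : ∀ w : Ω, f (h' w) = φ₀ (w : Fin n → A) := by
    intro w
    have h1 : p (h' w) = h w := LinearMap.congr_fun hh' w
    have h2 : ((p (h' w)) : (M : Type)) = f (h' w) := rfl
    have h3 : ((h w) : (M : Type)) = φ₀ (w : Fin n → A) := rfl
    rw [← h2, h1, h3]
  set N₀ := LinearMap.range (LinearMap.prod h' (-Ω.subtype)) with hN₀
  set EE := (↑M × (Fin n → A)) ⧸ N₀ with hEEdef
  set mk0 := N₀.mkQ with hmk0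
  set iE : (M : Type) →ₗ[A] EE := mk0 ∘ₗ LinearMap.inl A (M : Type) (Fin n → A) with hiEdef
  set ψP : (Fin n → A) →ₗ[A] EE := mk0 ∘ₗ LinearMap.inr A (M : Type) (Fin n → A) with hψPdef
  have hiEmk : ∀ x : (M : Type), iE x = Submodule.Quotient.mk (x, 0) := fun _ => rfl
  have hψPmk : ∀ y, ψP y = Submodule.Quotient.mk ((0 : (M : Type)), y) := fun _ => rfl
  have huE0 : N₀ ≤ LinearMap.ker (f ∘ₗ LinearMap.fst A (M : Type) (Fin n → A)
      + φ₀ ∘ₗ LinearMap.snd A (M : Type) (Fin n → A)) := by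
    rintro z ⟨w, rfl⟩
    simp only [LinearMap.mem_ker, LinearMap.add_apply, LinearMap.comp_apply,
      LinearMap.prod_apply, Pi.prod, Function.prod, LinearMap.fst_apply, LinearMap.snd_apply,
      LinearMap.neg_apply, Submodule.subtype_apply, map_neg]
    rw [hkey w]
    exact add_neg_cancel _
  set uE : EE →ₗ[A] (M : Type) :=
    Submodule.liftQ N₀ (f ∘ₗ LinearMap.fst A (M : Type) (Fin n → A)
      + φ₀ ∘ₗ LinearMap.snd A (M : Type) (Fin n → A)) huE0 with huEdef
  have huE_mk : ∀ z : ↑M × (Fin n → A),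
      uE (Submodule.Quotient.mk z) = f z.1 + φ₀ z.2 := by
    intro z
    rw [huEdef, Submodule.liftQ_apply]
    rfl
  have huE_iE : ∀ x, uE (iE x) = f x := by
    intro x
    rw [hiEmk, huE_mk]
    simp
  have huE_ψP : ∀ y, uE (ψP y) = φ₀ y := by
    intro y
    rw [hψPmk, huE_mk]
    simp
  have hiE_inj : Function.Injective iE := by
    intro x y hxy
    have h1 : Submodule.Quotient.mk (x, (0 : Fin n → A))
        = (Submodule.Quotient.mk (y, (0 : Fin n → A)) : _ ⧸ N₀) := by
      rw [← hiEmk, ← hiEmk, hxy]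
    have h2 : ((x, (0 : Fin n → A)) - (y, 0)) ∈ N₀ := (Submodule.Quotient.eq N₀).mp h1
    obtain ⟨w, hw⟩ := h2
    have hw2 : -(w : Fin n → A) = 0 := by
      have h3 := congrArg Prod.snd hw
      simpa [LinearMap.prod_apply, Pi.prod] using h3
    have hw3 : w = 0 := Subtype.ext (neg_eq_zero.mp hw2)
    have hw4 : h' w = x - y := by
      have h3 := congrArg Prod.fst hw
      simpa [LinearMap.prod_apply, Pi.prod] using h3
    rw [hw3, map_zero] at hw4
    exact sub_eq_zero.mp hw4.symm
  have hψι : ∀ w : Ω, ψP (w : Fin n → A) = iE (h' w) := by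
    intro w
    rw [hψPmk, hiEmk]
    rw [Submodule.Quotient.eq]
    refine ⟨-w, ?_⟩
    have h1 : (LinearMap.prod h' (-Ω.subtype)) (-w) = (-(h' w), (w : Fin n → A)) := by
      simp [LinearMap.prod_apply, Pi.prod, map_neg]
    rw [h1, Prod.ext_iff]
    constructor <;> simp
  -- the two middle maps of the key short exact sequence
  set aL : (M : Type) →ₗ[A] (EE × I) := LinearMap.prod iE (-p) with haLdef
  set bL : (EE × I) →ₗ[A] (M : Type) := LinearMap.coprod uE I.subtype with hbLdef
  have haL : ∀ x, aL x = (iE x, -(p x)) := fun _ => rfl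
  have hbL : ∀ z : EE × I, bL z = uE z.1 + (z.2 : (M : Type)) := fun _ => rfl
  have hba : ∀ x, bL (aL x) = 0 := by
    intro x
    rw [haL, hbL]
    simp only [huE_iE]
    have : ((-(p x) : I) : (M : Type)) = -(f x) := by
      rw [← hpval x]
      rfl
    rw [this]
    exact add_neg_cancel _
  have hainj : Function.Injective aL := by
    intro x y hxy
    have := congrArg Prod.fst hxy
    rw [haL, haL] at hxy
    exact hiE_inj (congrArg Prod.fst hxy)
  have hbsurj : Function.Surjective bL := by
    intro m
    obtain ⟨y, hy⟩ := hg₀ (q m)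
    have hmem : m - φ₀ y ∈ I := by
      rw [← Submodule.Quotient.mk_eq_zero I]
      have h1 : (Submodule.Quotient.mk (m - φ₀ y) : ↑M ⧸ I) = q m - g₀ y := by
        show q (m - φ₀ y) = q m - g₀ y
        rw [map_sub]
        rfl
      rw [h1, hy, sub_self]
    refine ⟨(ψP y, ⟨m - φ₀ y, hmem⟩), ?_⟩
    rw [hbL]
    simp only [huE_ψP]
    show φ₀ y + (m - φ₀ y) = m
    abel
  have hexact : ∀ z : EE × I, bL z = 0 → ∃ x, aL x = z := by
    rintro ⟨ee, t⟩ hz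
    obtain ⟨⟨x, y⟩, hxy⟩ := Submodule.mkQ_surjective N₀ ee
    have hee : ee = Submodule.Quotient.mk (x, y) := hxy.symm
    rw [hbL] at hz
    simp only [hee, huE_mk] at hz
    -- hz : f x + φ₀ y + t = 0
    have hy0 : g₀ y = 0 := by
      have h1 : φ₀ y = -(f x) - (t : (M : Type)) := by
        have := hz
        -- rearrange
        have h2 : f x + φ₀ y + (t : (M : Type)) = 0 := by
          simpa [add_assoc] using this
        linear_combination (norm := abel) h2
      have h3 : g₀ y = q (φ₀ y) := rfl
      rw [h3, h1, map_sub, map_neg]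
      have h4 : q (f x) = 0 := (Submodule.Quotient.mk_eq_zero I).mpr ⟨x, rfl⟩
      have h5 : q ((t : (M : Type))) = 0 := (Submodule.Quotient.mk_eq_zero I).mpr t.2
      rw [h4, h5]
      simp
    set w : Ω := ⟨y, LinearMap.mem_ker.mpr hy0⟩ with hwdef
    refine ⟨x + h' w, ?_⟩
    rw [haL]
    have hfst : iE (x + h' w) = ee := by
      rw [hiEmk, hee, Submodule.Quotient.eq]
      refine ⟨w, ?_⟩
      have : (LinearMap.prod h' (-Ω.subtype)) w = (h' w, -y) := by
        simp [LinearMap.prod_apply, Pi.prod, hwdef]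
      rw [this, Prod.ext_iff]
      constructor <;> simp
    have hsnd : -(p (x + h' w)) = t := by
      apply Subtype.ext
      have h6 : ((p (x + h' w)) : (M : Type)) = f x + f (h' w) := by
        rw [hpval, map_add]
      show -((p (x + h' w)) : (M : Type)) = (t : (M : Type))
      rw [h6, hkey w]
      have h7 : f x + φ₀ (w : Fin n → A) + (t : (M : Type)) = 0 := hz
      linear_combination (norm := abel) -h7
    rw [hfst, hsnd]
  -- package as a short exact sequence in `ModuleCat`
  set EI : ModuleCat.{0} A := ModuleCat.of A (EE × I) with hEIdef
  let aH : M ⟶ EI := ModuleCat.ofHom aL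
  let bH : EI ⟶ M := ModuleCat.ofHom bL
  have hw0 : aH ≫ bH = 0 := by
    ext x
    exact hba x
  haveI hmono : Mono aH := (ModuleCat.mono_iff_injective aH).mpr hainj
  haveI hepi : Epi bH := (ModuleCat.epi_iff_surjective bH).mpr hbsurj
  have hse : (ShortComplex.mk aH bH hw0).ShortExact :=
    { exact := (ShortComplex.moduleCat_exact_iff _).mpr hexact }
  obtain ⟨r, hr⟩ := hext EI aH bH hw0 hse
  let rL : (EE × I) →ₗ[A] (M : Type) := r.hom
  have hr2 : ∀ x : (M : Type), rL (aL x) = x := by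
    intro x
    exact LinearMap.congr_fun (congrArg ModuleCat.Hom.hom hr : rL.comp aL = LinearMap.id) x
  set r1 : EE →ₗ[A] (M : Type) := rL ∘ₗ LinearMap.inl A EE I with hr1def
  set r2 : I →ₗ[A] (M : Type) := rL ∘ₗ LinearMap.inr A EE I with hr2def
  have hr12 : ∀ x : (M : Type), r1 (iE x) - r2 (p x) = x := by
    intro x
    have h3 : aL x = (LinearMap.inl A EE I) (iE x) + (LinearMap.inr A EE I) (-(p x)) := by
      rw [haL]
      simp
    have h4 := hr2 x
    rw [h3, map_add] at h4
    have h5 : rL ((LinearMap.inr A EE I) (-(p x))) = -(r2 (p x)) := by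
      have h6 : ((LinearMap.inr A EE I) (-(p x))) = -((LinearMap.inr A EE I) (p x)) :=
        map_neg _ _
      rw [h6, map_neg]
      rfl
    rw [h5] at h4
    have h7 : r1 (iE x) - r2 (p x)
        = rL ((LinearMap.inl A EE I) (iE x)) + -(r2 (p x)) := by
      rw [sub_eq_add_neg]
      rfl
    exact h7.trans h4
  set θ : (M : Type) →ₗ[A] (M : Type) := r1 ∘ₗ iE with hθdef
  set gg : (M : Type) →ₗ[A] (M : Type) := r2 ∘ₗ p with hggdef
  have hθx : ∀ x, θ x - gg x = x := hr12
  rcases auxStrat_fitting K M hM θ with ⟨m, hm⟩ | hbij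
  · -- `θ` nilpotent: then `gg = θ - 1` is invertible, forcing `f` injective, so `f = 0`.
    have hθg : gg = θ - 1 := by
      ext x
      have h2 : θ x = x + gg x := eq_add_of_sub_eq (hθx x)
      show gg x = θ x - x
      rw [h2]
      abel
    have hnil : IsNilpotent θ := ⟨m, hm⟩
    have hunit : IsUnit (1 - θ) := hnil.isUnit_one_sub
    have hunit2 : IsUnit gg := by
      rw [hθg, show θ - 1 = -(1 - θ) from (neg_sub 1 θ).symm]
      exact hunit.neg
    have hgbij : Function.Bijective gg := (Module.End.isUnit_iff gg).mp hunit2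
    have hpinj : Function.Injective p := by
      intro x y hxy
      apply hgbij.1
      show r2 (p x) = r2 (p y)
      rw [hxy]
    have hfinj : Function.Injective f := by
      intro x y hxy
      exact hpinj (Subtype.ext hxy)
    apply hf
    ext x
    have h8 : f (f x) = f 0 := by rw [hf2 x, map_zero]
    simpa using hfinj h8
  · -- `θ` bijective: the inclusion `I ⊆ M` splits, contradicting indecomposability.
    set θe := LinearEquiv.ofBijective θ hbij with hθe
    set t : EE →ₗ[A] (M : Type) := (θe.symm : (M : Type) →ₗ[A] (M : Type)) ∘ₗ r1 with htdef
    have ht : ∀ x, t (iE x) = x := by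
      intro x
      show θe.symm (r1 (iE x)) = x
      show θe.symm (θe x) = x
      exact θe.symm_apply_apply x
    set θP : (Fin n → A) →ₗ[A] (M : Type) := φ₀ - f ∘ₗ t ∘ₗ ψP with hθPdef
    have hθPap : ∀ y, θP y = φ₀ y - f (t (ψP y)) := fun _ => rfl
    have hθPΩ : ∀ w : Ω, θP (w : Fin n → A) = 0 := by
      intro w
      rw [hθPap, hψι w, ht, hkey w, sub_self]
    have hqθP : ∀ y, q (θP y) = g₀ y := by
      intro y
      rw [hθPap, map_sub]
      have h1 : q (f (t (ψP y))) = 0 := (Submodule.Quotient.mk_eq_zero I).mpr ⟨_, rfl⟩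
      rw [h1, sub_zero]
      rfl
    set eΩ := g₀.quotKerEquivOfSurjective hg₀ with heΩ
    have hΩle : Ω ≤ LinearMap.ker θP := fun x hx => LinearMap.mem_ker.mpr (hθPΩ ⟨x, hx⟩)
    set sC : ((M : Type) ⧸ I) →ₗ[A] (M : Type) :=
      (Submodule.liftQ Ω θP hΩle) ∘ₗ (eΩ.symm : ((M : Type) ⧸ I) →ₗ[A] ((Fin n → A) ⧸ Ω)) with hsCdef
    have hsC : ∀ y : (Fin n → A), sC (g₀ y) = θP y := by
      intro y
      show (Submodule.liftQ Ω θP hΩle) (eΩ.symm (g₀ y)) = θP y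
      have h1 : eΩ (Submodule.Quotient.mk y) = g₀ y := by
        simp [heΩ, LinearMap.quotKerEquivOfSurjective, LinearMap.quotKerEquivRange_apply_mk]
      rw [← h1, LinearEquiv.symm_apply_apply, Submodule.liftQ_apply]
    have hqs : ∀ c, q (sC c) = c := by
      intro c
      obtain ⟨y, rfl⟩ := hg₀ c
      rw [hsC, hqθP]
    set ei : (M : Type) →ₗ[A] (M : Type) := sC ∘ₗ q with heidef
    have hei : ∀ x, ei (ei x) = ei x := by
      intro x
      show sC (q (sC (q x))) = sC (q x)
      rw [hqs]
    rcases auxStrat_idem_dichotomy hM ei hei with h0 | h1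
    · -- `sC ∘ q = 0` forces `q = 0`, i.e. `f` surjective, contradiction with `f² = 0`.
      have hsCinj : Function.Injective sC := by
        intro c d hcd
        rw [← hqs c, ← hqs d, hcd]
      have hq0 : ∀ x : (M : Type), q x = 0 := by
        intro x
        apply hsCinj
        have h2 : ei x = 0 := by rw [h0]; rfl
        rw [show sC (q x) = ei x from rfl, h2, map_zero]
      apply hf
      ext x
      have h3 : x ∈ I := (Submodule.Quotient.mk_eq_zero I).mp (hq0 x)
      obtain ⟨y, hy⟩ := h3
      show f x = 0
      rw [← hy]
      exact hf2 y
    · -- `sC ∘ q = id` forces `I = 0`, i.e. `f = 0`.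
      apply hf
      ext x
      have h3 : q (f x) = 0 := (Submodule.Quotient.mk_eq_zero I).mpr ⟨x, rfl⟩
      have h4 : f x = ei (f x) := by rw [h1]; rfl
      show f x = 0
      rw [h4, show ei (f x) = sC (q (f x)) from rfl, h3, map_zero]

end StratAuxHR
section StratAuxEnd

attribute [local instance] ModuleCat.moduleOfAlgebraModule
  ModuleCat.isScalarTower_of_algebra_moduleCat

/-- Over an algebraically closed field, an indecomposable finitely generated module
without self-extensions over a finite-dimensional hereditary algebra has trivial
endomorphism algebra. -/
theorem auxStrat_end_equiv (K : Type) [Field K] [IsAlgClosed K] {A : Type} [Ring A]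
    [Algebra K A] [FiniteDimensional K A]
    (hered : ∀ J : Ideal A, Module.Projective A J)
    (M : ModuleCat.{0} A) (hfin : Module.Finite A (M : Type))
    (hM : Indec M) (hext : ext1Zero M M) :
    Nonempty ((End M) ≃ₐ[K] K) := by
  classical
  haveI := hfin
  haveI : Module.Finite K (M : Type) := Module.Finite.trans A (M : Type)
  haveI : Nontrivial (M : Type) := auxStrat_nontrivial_of_not_isZero hM.1
  have hnilz : ∀ (m : ℕ) (ψ : (M : Type) →ₗ[A] (M : Type)), ψ ^ m = 0 → ψ = 0 := by
    intro m
    induction m with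
    | zero =>
      intro ψ hψ
      exfalso
      obtain ⟨x, y, hxy⟩ := exists_pair_ne (M : Type)
      apply hxy
      have h1 : ∀ z : (M : Type), z = 0 := by
        intro z
        have h2 := LinearMap.congr_fun hψ z
        simpa using h2
      rw [h1 x, h1 y]
    | succ m ih =>
      intro ψ hψ
      rcases Nat.eq_zero_or_pos m with rfl | hm
      · simpa [pow_one] using hψ
      · by_cases hz : ψ ^ m = 0
        · exact ih ψ hz
        · exfalso
          have hsq : ∀ x, (ψ ^ m) ((ψ ^ m) x) = 0 := by
            intro x
            have h1 : (ψ ^ m) ((ψ ^ m) x) = (ψ ^ (m + m)) x := by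
              rw [pow_add, Module.End.mul_apply]
            have h2 : ψ ^ (m + m) = ψ ^ (m + 1) * ψ ^ (m - 1) := by
              rw [← pow_add, show m + 1 + (m - 1) = m + m from by omega]
            rw [h1, h2, hψ, zero_mul, LinearMap.zero_apply]
          exact auxStrat_happel_ringel K hered M hM hext (ψ ^ m) hsq hz
  have hbij : ∀ ψ : (M : Type) →ₗ[A] (M : Type), ψ ≠ 0 → Function.Bijective ψ := by
    intro ψ hψ
    rcases auxStrat_fitting K M hM ψ with ⟨m, hm⟩ | hb
    · exact absurd (hnilz m ψ hm) hψ
    · exact hb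
  have hnt : Nontrivial (End M) := by
    refine ⟨⟨𝟙 M, 0, ?_⟩⟩
    intro hcon
    obtain ⟨x, y, hxy⟩ := exists_pair_ne (M : Type)
    apply hxy
    have h1 : ∀ z : (M : Type), z = 0 := by
      intro z
      have h2 := LinearMap.congr_fun
        (congrArg ModuleCat.Hom.hom hcon : (LinearMap.id : (M : Type) →ₗ[A] (M : Type)) = 0) z
      exact h2
    rw [h1 x, h1 y]
  have hinj : Function.Injective (algebraMap K (End M)) :=
    (algebraMap K (End M)).injective
  have hsurj : Function.Surjective (algebraMap K (End M)) := by
    intro φ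
    set φl : (M : Type) →ₗ[A] (M : Type) := φ.hom with hφl
    set αK : Module.End K (M : Type) := φl.restrictScalars K with hαK
    obtain ⟨c, hc⟩ := Module.End.exists_eigenvalue αK
    obtain ⟨v, hv⟩ := hc.exists_hasEigenvector
    refine ⟨c, ?_⟩
    have hvy : φl v = c • v := hv.apply_eq_smul
    have hψ0 : φ - algebraMap K (End M) c = 0 := by
      by_contra hne
      set aME : End M := algebraMap K (End M) c with haME
      let aM : (M : Type) →ₗ[A] (M : Type) := aME.hom
      have hsmul : aM v = c • v := by
        have h3 : aME = (c • (1 : End M) : End M) := Algebra.algebraMap_eq_smul_one c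
        have h4 : aM = ((c • (1 : End M) : End M).hom : (M : Type) →ₗ[A] (M : Type)) := congrArg ModuleCat.Hom.hom h3
        rw [h4]
        rfl
      set sψE : End M := φ - algebraMap K (End M) c with hsψE
      let sψ : (M : Type) →ₗ[A] (M : Type) := sψE.hom
      have hψlv : sψ v = 0 := by
        have h4 : sψ v = φl v - aM v := rfl
        rw [h4, hsmul, hvy, sub_self]
      have hb := hbij sψ (fun h => hne (ModuleCat.hom_ext h))
      apply hv.right
      apply hb.1
      rw [hψlv, map_zero]
    exact (sub_eq_zero.mp hψ0).symm
  refine ⟨(AlgEquiv.ofBijective (Algebra.ofId K (End M)) ⟨?_, ?_⟩).symm⟩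
  · intro a b hab
    exact hinj (by simpa [Algebra.ofId_apply] using hab)
  · intro φ
    obtain ⟨c, hcx⟩ := hsurj φ
    exact ⟨c, by simpa [Algebra.ofId_apply] using hcx⟩

/-- Forward direction key: `End(M) ≅ K` forces indecomposability. -/
theorem auxStrat_indec_of_endEquiv (K : Type) [Field K] {A : Type} [Ring A] [Algebra K A]
    (M : ModuleCat.{0} A) (hne : Nonempty ((End M) ≃ₐ[K] K)) : Indec M := by
  obtain ⟨eqv⟩ := hne
  constructor
  · intro hz
    have h1 : (𝟙 M : End M) = 0 := hz.eq_of_src _ _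
    have h2 : (1 : End M) = 0 := h1
    have h3 := congrArg eqv h2
    rw [map_one, map_zero] at h3
    exact one_ne_zero h3
  · rintro N₁ N₂ ⟨h⟩
    set e : End M := (h.hom ≫ biprod.fst ≫ biprod.inl ≫ h.inv : M ⟶ M) with hedef
    have he : e ≫ e = e := by
      rw [hedef]
      simp
    have hmul : e * e = e := he
    have hk : eqv e * eqv e = eqv e := by rw [← map_mul, hmul]
    have hk2 : eqv e = 0 ∨ eqv e = 1 := by
      rcases mul_eq_zero.mp (show eqv e * (eqv e - 1) = 0 by
        rw [mul_sub, hk, mul_one, sub_self]) with h4 | h4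
      · left; exact h4
      · right; exact sub_eq_zero.mp h4
    rcases hk2 with h4 | h4
    · left
      have he0 : e = 0 := by
        have h5 := congrArg eqv.symm h4
        rw [AlgEquiv.symm_apply_apply, map_zero] at h5
        exact h5
      rw [IsZero.iff_id_eq_zero]
      have h5 : (𝟙 N₁ : N₁ ⟶ N₁) = (biprod.inl ≫ h.inv) ≫ e ≫ (h.hom ≫ biprod.fst) := by
        rw [hedef]
        simp
      rw [he0] at h5
      simpa using h5
    · right
      have he1 : e = 𝟙 M := by
        have h5 := congrArg eqv.symm h4
        rw [AlgEquiv.symm_apply_apply, map_one] at h5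
        exact h5
      rw [IsZero.iff_id_eq_zero]
      have h5 : (biprod.inr ≫ h.inv) ≫ e ≫ (h.hom ≫ biprod.snd) = 0 := by
        rw [hedef]
        simp
      have h6 : (biprod.inr ≫ h.inv) ≫ e ≫ (h.hom ≫ biprod.snd) = 𝟙 N₂ := by
        rw [he1]
        simp
      rw [h5] at h6
      exact h6.symm

end StratAuxEnd
/-- Over a finite-dimensional hereditary algebra `A` over an
algebraically closed field `K`, a sequence `(X_1, …, X_t)` of (finitely
generated) `A`-modules is an exceptional sequence if and only if the completely
ordered set `{X_1, …, X_t}` is a stratifying system over `A`. -/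
theorem exceptionalSeq_iff_stratifyingSystem
    (K : Type) [Field K] [IsAlgClosed K] (A : Type) [Ring A] [Algebra K A]
    [FiniteDimensional K A] (hereditary : ∀ J : Ideal A, Module.Projective A J)
    (L : List (ModuleCat.{0} A)) (hfg : ∀ M ∈ L, Module.Finite A M) :
    IsExceptionalSeq K L ↔ IsStratifyingSystem L := by
  constructor
  · rintro ⟨h1, h2, h3⟩
    refine ⟨?_, ?_, ?_⟩
    · intro M hM
      exact auxStrat_indec_of_endEquiv K M ((h1 M hM).1)
    · intro i j hij
      exact h2 j i hij
    · intro i j hij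
      exact h3 j i hij
  · rintro ⟨h1, h2, h3⟩
    refine ⟨?_, ?_, ?_⟩
    · intro M hM
      obtain ⟨i, hi⟩ := List.mem_iff_get.mp hM
      have hext : ext1Zero M M := by
        have h4 := h3 i i le_rfl
        rwa [hi] at h4
      exact ⟨auxStrat_end_equiv K hereditary M (hfg M hM) (h1 M hM) hext, hext⟩
    · intro i j hij
      exact h2 j i hij
    · intro i j hij
      exact h3 j i hij
end

section
/- Let A = KÃ_{p,q} with 1 < p ≤ q. Then the sets F = {F_1, ..., F_{p-1}} and G = {G_1, ..., G_{q-1}}, each with the indicated order, are stratifying systems over A. -/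
open CategoryTheory CategoryTheory.Limits

section Aux

variable {A : Type} [Ring A]

lemma indec_of_simple (M : ModuleCat.{0} A) (h : IsSimpleModule A M) : Indec M := by
  constructor
  · intro hz
    have hid : 𝟙 M = (0 : M ⟶ M) := hz.eq_of_src _ _
    haveI : Subsingleton M := ⟨fun a b => by
      have h1 : a = (0 : M ⟶ M) a := by rw [← hid]; rfl
      have h2 : b = (0 : M ⟶ M) b := by rw [← hid]; rfl
      rw [h1, h2]
      exact (LinearMap.zero_apply a).trans (LinearMap.zero_apply b).symm⟩
    haveI : IsSimpleOrder (Submodule A M) := h.1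
    exact bot_ne_top (α := Submodule A M) (Subsingleton.elim _ _)
  · rintro N₁ N₂ ⟨e⟩
    set q₁ : M ⟶ M := e.hom ≫ biprod.fst ≫ biprod.inl ≫ e.inv with hq₁
    rcases h.1.2 (LinearMap.ker q₁.hom) with hk | hk
    · -- q₁ injective
      right
      have hinj : Function.Injective q₁ := LinearMap.ker_eq_bot.mp hk
      haveI : Mono q₁ := (ModuleCat.mono_iff_injective q₁).mpr hinj
      have hq2 : (e.hom ≫ biprod.snd ≫ biprod.inr ≫ e.inv) ≫ q₁ = 0 := by
        rw [hq₁]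
        simp
      have hz : (e.hom ≫ biprod.snd ≫ biprod.inr ≫ e.inv : M ⟶ M) = 0 := by
        have := hq2.trans (zero_comp (f := q₁)).symm
        exact (cancel_mono q₁).mp this
      have hpi : (e.hom ≫ (biprod.snd : N₁ ⊞ N₂ ⟶ N₂)) = 0 := by
        have : (e.hom ≫ biprod.snd ≫ biprod.inr ≫ e.inv) ≫ e.hom ≫ biprod.snd
            = e.hom ≫ biprod.snd := by simp
        rw [hz, zero_comp] at this
        exact this.symm
      haveI : Epi (e.hom ≫ (biprod.snd : N₁ ⊞ N₂ ⟶ N₂)) := epi_comp _ _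
      rw [CategoryTheory.Limits.IsZero.iff_id_eq_zero]
      have := (cancel_epi (e.hom ≫ (biprod.snd : N₁ ⊞ N₂ ⟶ N₂))).mp
        (by rw [Category.comp_id, hpi, comp_zero] :
          (e.hom ≫ biprod.snd) ≫ 𝟙 N₂ = (e.hom ≫ biprod.snd) ≫ 0)
      exact this
    · -- q₁ = 0
      left
      have hz : q₁ = 0 := ModuleCat.hom_ext (LinearMap.ker_eq_top.mp hk)
      have hpi : (e.hom ≫ (biprod.fst : N₁ ⊞ N₂ ⟶ N₁)) = 0 := by
        have : q₁ ≫ e.hom ≫ biprod.fst = e.hom ≫ biprod.fst := by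
          rw [hq₁]; simp
        rw [hz, zero_comp] at this
        exact this.symm
      haveI : Epi (e.hom ≫ (biprod.fst : N₁ ⊞ N₂ ⟶ N₁)) := epi_comp _ _
      rw [CategoryTheory.Limits.IsZero.iff_id_eq_zero]
      exact (cancel_epi (e.hom ≫ (biprod.fst : N₁ ⊞ N₂ ⟶ N₁))).mp
        (by rw [Category.comp_id, hpi, comp_zero])

lemma homZero_of_simples (X Y : ModuleCat.{0} A) (hX : IsSimpleModule A X)
    (hY : IsSimpleModule A Y) (hne : ¬ Nonempty (X ≅ Y)) : homZero X Y := by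
  intro f
  by_contra hf
  apply hne
  have hker : LinearMap.ker f.hom = ⊥ := by
    rcases hX.1.2 (LinearMap.ker f.hom) with h | h
    · exact h
    · exact absurd (ModuleCat.hom_ext (LinearMap.ker_eq_top.mp h)) hf
  have hrange : LinearMap.range f.hom = ⊤ := by
    rcases hY.1.2 (LinearMap.range f.hom) with h | h
    · exact absurd (ModuleCat.hom_ext (LinearMap.range_eq_bot.mp h)) hf
    · exact h
  exact ⟨(LinearEquiv.ofBijective f.hom
    ⟨LinearMap.ker_eq_bot.mp hker, LinearMap.range_eq_top.mp hrange⟩).toModuleIso⟩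

end Aux

section Main

variable {K : Type} [Field K] {p q : ℕ}

lemma strat_of_simples (T : APQAlgebra K p q) (n : ℕ) (g : ℕ → ℕ)
    (hlt : ∀ i < n, g i < p + q)
    (hne : ∀ i j, i < n → j < n → i ≠ j → g i ≠ g j)
    (hnoarrow : ∀ i j, i < n → j < n → i ≤ j → ¬ apqArrow p q (g j) (g i)) :
    IsStratifyingSystem ((List.range n).map (fun i => T.S (g i))) := by
  set L : List (ModuleCat.{0} T.A) := (List.range n).map (fun i => T.S (g i)) with hL
  have hlen : L.length = n := by simp [hL]
  have hget : ∀ i : Fin L.length, L.get i = T.S (g i.val) := by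
    intro i
    simp [hL, List.get_eq_getElem]
  have hvlt : ∀ i : Fin L.length, i.val < n := fun i => hlen ▸ i.isLt
  refine ⟨?_, ?_, ?_⟩
  · intro M hM
    rw [hL, List.mem_map] at hM
    obtain ⟨i, hi, rfl⟩ := hM
    rw [List.mem_range] at hi
    exact indec_of_simple _ (T.S_simple _ (hlt i hi))
  · intro i j hij
    rw [hget, hget]
    refine homZero_of_simples _ _ (T.S_simple _ (hlt _ (hvlt j)))
      (T.S_simple _ (hlt _ (hvlt i))) ?_
    rintro ⟨e⟩
    exact hne j.val i.val (hvlt j) (hvlt i) (by omega)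
      (T.S_pairwise_noniso _ (hlt _ (hvlt j)) _ (hlt _ (hvlt i)) ⟨e⟩)
  · intro i j hij
    rw [hget, hget]
    by_contra h
    exact hnoarrow i.val j.val (hvlt i) (hvlt j) hij
      ((T.ext_simples _ (hlt _ (hvlt j)) _ (hlt _ (hvlt i))).mp h)

end Main

/-- Let `A = KÃ_{p,q}` with `1 < p ≤ q`.  Then the ordered sets
`F = (F_1, …, F_{p-1})` and `G = (G_1, …, G_{q-1})` are stratifying systems
over `A`. -/
theorem Flist_Glist_stratifyingSystem
    (K : Type) [Field K] [IsAlgClosed K] (p q : ℕ) (hp : 1 < p) (hpq : p ≤ q)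
    (T : APQAlgebra K p q) :
    IsStratifyingSystem T.Flist ∧ IsStratifyingSystem T.Glist := by
  constructor
  · exact strat_of_simples T (p - 1) (fun i => p - 1 - i)
      (fun i hi => by omega)
      (fun i j hi hj hij => by omega)
      (fun i j hi hj hij => by unfold apqArrow; omega)
  · exact strat_of_simples T (q - 1) (fun j => p + q - 2 - j)
      (fun i hi => by omega)
      (fun i j hi hj hij => by omega)
      (fun i j hi hj hij => by unfold apqArrow; omega)
end

section
/- Let A be a finite-dimensional hereditary K-algebra. If I_j and I_m are indecomposable injective A-modules, then Ext^1_A(τ^t I_j, τ^{t-r} I_m) = 0 for all natural numbers t ≥ r ≥ 0. -/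
open CategoryTheory CategoryTheory.Limits

theorem hered_lift {A : Type} [Ring A] (hered : ∀ J : Ideal A, Module.Projective A J)
    {X M N : Type} [AddCommGroup M] [Module A M] [AddCommGroup N] [Module A N]
    (Ω : Submodule A (X →₀ A))
    (e : M →ₗ[A] N) (he : Function.Surjective e) (d : ↥Ω →ₗ[A] N) :
    ∃ s : ↥Ω →ₗ[A] M, ∀ ω : Ω, e (s ω) = d ω := by
  classical
  let S : Set (Set X × ((X →₀ A) →ₗ.[A] M)) :=
    {P | P.2.domain = Ω ⊓ Finsupp.supported A A P.1 ∧
      ∀ (x : X →₀ A) (hx : x ∈ P.2.domain) (hΩ : x ∈ Ω), e (P.2 ⟨x, hx⟩) = d ⟨x, hΩ⟩}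
  have hchains : ∀ c ⊆ S, IsChain (· ≤ ·) c → ∃ ub ∈ S, ∀ z ∈ c, z ≤ ub := by
    intro c hcS hchain
    rcases c.eq_empty_or_nonempty with rfl | hne
    · refine ⟨(∅, ⟨Ω ⊓ Finsupp.supported A A (∅ : Set X), 0⟩), ⟨rfl, ?_⟩, by simp⟩
      intro x hx hΩ
      have h2 : x ∈ Finsupp.supported A A (∅ : Set X) := (Submodule.mem_inf.1 hx).2
      rw [Finsupp.supported_empty] at h2
      have hx0 : x = 0 := (Submodule.mem_bot A).1 h2
      have hz : (⟨x, hΩ⟩ : Ω) = 0 := Subtype.ext hx0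
      rw [hz, map_zero]
      show e ((0 : ↥(Ω ⊓ Finsupp.supported A A (∅ : Set X)) →ₗ[A] M) ⟨x, hx⟩) = 0
      rw [LinearMap.zero_apply, map_zero]
    · have hchain2 : IsChain (· ≤ ·) (Prod.snd '' c) :=
        hchain.image_of_map_rel _ _ _ (fun _ _ h => h.2)
      have hdir : DirectedOn (· ≤ ·) (Prod.snd '' c) := hchain2.directedOn
      set Isup : Set X := ⋃ P ∈ c, P.1 with hIsup
      set psup := LinearPMap.sSup _ hdir with hpsup
      have hdomdef : psup.domain = sSup (LinearPMap.domain '' (Prod.snd '' c)) := rfl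
      have hdir2 : DirectedOn (· ≤ ·) (LinearPMap.domain '' (Prod.snd '' c)) := by
        rintro _ ⟨p1, hp1, rfl⟩ _ ⟨p2, hp2, rfl⟩
        obtain ⟨q, hq, h1, h2⟩ := hdir _ hp1 _ hp2
        exact ⟨q.domain, ⟨q, hq, rfl⟩, h1.1, h2.1⟩
      have hdomeq : psup.domain = Ω ⊓ Finsupp.supported A A Isup := by
        apply le_antisymm
        · rw [hdomdef]
          apply sSup_le
          rintro q ⟨p2, ⟨P, hPc, rfl⟩, rfl⟩
          rw [(hcS hPc).1]
          exact inf_le_inf le_rfl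
            (Finsupp.supported_mono (Set.subset_biUnion_of_mem hPc))
        · intro y hy
          have hyΩ : y ∈ Ω := (Submodule.mem_inf.1 hy).1
          have hysup : y ∈ Finsupp.supported A A Isup := (Submodule.mem_inf.1 hy).2
          have hfin : ∀ (t : Finset X), (↑t : Set X) ⊆ Isup →
              ∃ P ∈ c, (↑t : Set X) ⊆ P.1 := by
            intro t
            induction t using Finset.induction_on with
            | empty =>
              intro _
              obtain ⟨P, hP⟩ := hne
              exact ⟨P, hP, by simp⟩
            | @insert a t hnotmem ih =>
              intro hsub
              obtain ⟨P, hPc, hPt⟩ := ih (fun z hz => hsub (by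
                simp only [Finset.coe_insert, Set.mem_insert_iff]; exact Or.inr hz))
              have ha : a ∈ Isup := hsub (by simp)
              rw [hIsup, Set.mem_iUnion₂] at ha
              obtain ⟨Q, hQc, haQ⟩ := ha
              rcases eq_or_ne P Q with rfl | hPQ
              · refine ⟨P, hPc, ?_⟩
                intro z hz
                rcases (by simpa using hz : z = a ∨ z ∈ (↑t : Set X)) with rfl | hz'
                · exact haQ
                · exact hPt hz'
              · rcases hchain hPc hQc hPQ with h | h
                · refine ⟨Q, hQc, ?_⟩
                  intro z hz
                  rcases (by simpa using hz : z = a ∨ z ∈ (↑t : Set X)) with rfl | hz'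
                  · exact haQ
                  · exact h.1 (hPt hz')
                · refine ⟨P, hPc, ?_⟩
                  intro z hz
                  rcases (by simpa using hz : z = a ∨ z ∈ (↑t : Set X)) with rfl | hz'
                  · exact h.1 haQ
                  · exact hPt hz'
          obtain ⟨P, hPc, hsub⟩ := hfin y.support ((Finsupp.mem_supported _ _).1 hysup)
          have hyP : y ∈ P.2.domain := by
            rw [(hcS hPc).1]
            exact Submodule.mem_inf.2 ⟨hyΩ, (Finsupp.mem_supported _ _).2 hsub⟩
          rw [hdomdef]
          exact Submodule.mem_sSup_of_mem
            (Set.mem_image_of_mem LinearPMap.domain (Set.mem_image_of_mem Prod.snd hPc)) hyP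
      have hcompat : ∀ (x : X →₀ A) (hx : x ∈ psup.domain) (hΩ : x ∈ Ω),
          e (psup ⟨x, hx⟩) = d ⟨x, hΩ⟩ := by
        intro x hx hΩ
        have hx' : x ∈ sSup (LinearPMap.domain '' (Prod.snd '' c)) := hdomdef ▸ hx
        have hnon : (LinearPMap.domain '' (Prod.snd '' c)).Nonempty :=
          (Set.Nonempty.image _ (Set.Nonempty.image _ hne))
        obtain ⟨q, hq, hxq⟩ := (Submodule.mem_sSup_of_directed hnon hdir2).1 hx'
        obtain ⟨p2, hp2, rfl⟩ := hq
        obtain ⟨P, hPc, rfl⟩ := hp2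
        have happ := LinearPMap.sSup_apply hdir (⟨P, hPc, rfl⟩ : P.2 ∈ Prod.snd '' c) ⟨x, hxq⟩
        have h2 : psup ⟨x, hx⟩ = P.2 ⟨x, hxq⟩ := by rw [← happ]
        rw [h2]
        exact (hcS hPc).2 x hxq hΩ
      refine ⟨(Isup, psup), ⟨hdomeq, hcompat⟩, ?_⟩
      intro P hP
      exact ⟨Set.subset_biUnion_of_mem hP, LinearPMap.le_sSup hdir ⟨P, hP, rfl⟩⟩
  obtain ⟨m, hm⟩ := zorn_le₀ S hchains
  have hmS := hm.1
  have huniv : m.1 = Set.univ := by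
    by_contra hne
    obtain ⟨x, hx⟩ : ∃ x, x ∉ m.1 := by
      by_contra h
      push_neg at h
      exact hne (Set.eq_univ_of_forall h)
    set I := m.1 with hI
    set p := m.2 with hp
    set Ω₁ := Ω ⊓ Finsupp.supported A A (insert x I) with hΩ₁
    have hΩ₁Ω : Ω₁ ≤ Ω := inf_le_left
    have hΩ₁sup : Ω₁ ≤ Finsupp.supported A A (insert x I) := inf_le_right
    have hdomle : p.domain ≤ Ω₁ := by
      rw [hmS.1]
      exact inf_le_inf le_rfl (Finsupp.supported_mono (Set.subset_insert x I))
    let φ : ↥Ω₁ →ₗ[A] A := (Finsupp.lapply x).comp Ω₁.subtype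
    let J : Ideal A := LinearMap.range φ
    haveI := hered J
    have hφ' : Function.Surjective φ.rangeRestrict := LinearMap.surjective_rangeRestrict φ
    obtain ⟨ρ, hρ⟩ := Module.projective_lifting_property φ.rangeRestrict LinearMap.id hφ'
    let dΩ₁ : ↥Ω₁ →ₗ[A] N := d.comp (Submodule.inclusion hΩ₁Ω)
    obtain ⟨t, ht⟩ := Module.projective_lifting_property e (dΩ₁.comp ρ) he
    have hcoord : ∀ ω : ↥Ω₁, ((ω : X →₀ A) - ((ρ (φ.rangeRestrict ω) : ↥Ω₁) : X →₀ A)) x = 0 := by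
      intro ω
      have h1 : ((ρ (φ.rangeRestrict ω) : ↥Ω₁) : X →₀ A) x = φ (ρ (φ.rangeRestrict ω)) := rfl
      have h3 : φ.rangeRestrict (ρ (φ.rangeRestrict ω)) = φ.rangeRestrict ω := by
        have h := congrArg (fun f => f (φ.rangeRestrict ω)) hρ
        exact h
      have h5 : φ (ρ (φ.rangeRestrict ω)) = φ ω :=
        congrArg (fun (v : ↥J) => (v : A)) h3
      rw [Finsupp.sub_apply, h1, h5]
      exact sub_self (φ ω)
    have hψmem : ∀ ω : ↥Ω₁, (ω : X →₀ A) - ((ρ (φ.rangeRestrict ω) : ↥Ω₁) : X →₀ A) ∈ p.domain := by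
      intro ω
      rw [hmS.1]
      refine Submodule.mem_inf.2 ⟨?_, ?_⟩
      · exact Submodule.sub_mem _ (hΩ₁Ω ω.2) (hΩ₁Ω (ρ (φ.rangeRestrict ω)).2)
      · rw [Finsupp.mem_supported']
        intro z hz
        rcases eq_or_ne z x with rfl | hzx
        · exact hcoord ω
        · have hω : (ω : X →₀ A) z = 0 :=
            (Finsupp.mem_supported' _ _).1 (hΩ₁sup ω.2) z (by simp [hzx, hz, hI])
          have hρω : ((ρ (φ.rangeRestrict ω) : ↥Ω₁) : X →₀ A) z = 0 :=
            (Finsupp.mem_supported' _ _).1 (hΩ₁sup (ρ (φ.rangeRestrict ω)).2) z (by simp [hzx, hz, hI])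
          rw [Finsupp.sub_apply, hω, hρω, sub_self]
    let ψ : ↥Ω₁ →ₗ[A] ↥p.domain :=
      LinearMap.codRestrict p.domain (Ω₁.subtype - Ω₁.subtype ∘ₗ ρ ∘ₗ φ.rangeRestrict) hψmem
    let s₁ : ↥Ω₁ →ₗ[A] M := p.toFun ∘ₗ ψ + t ∘ₗ φ.rangeRestrict
    let p' : (X →₀ A) →ₗ.[A] M := ⟨Ω₁, s₁⟩
    have hcompat' : ∀ (y : X →₀ A) (hy : y ∈ p'.domain) (hΩy : y ∈ Ω),
        e (p' ⟨y, hy⟩) = d ⟨y, hΩy⟩ := by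
      intro y hy hΩy
      set w : ↥Ω₁ := ⟨y, hy⟩ with hw
      have hs : p' ⟨y, hy⟩ = p.toFun (ψ w) + t (φ.rangeRestrict w) := rfl
      rw [hs, map_add]
      have he1 : e (p.toFun (ψ w)) = d ⟨((ψ w : ↥p.domain) : X →₀ A), hΩ₁Ω (hdomle (ψ w).2)⟩ :=
        hmS.2 ((ψ w : ↥p.domain) : X →₀ A) (ψ w).2 (hΩ₁Ω (hdomle (ψ w).2))
      have he2 : e (t (φ.rangeRestrict w)) = d (Submodule.inclusion hΩ₁Ω (ρ (φ.rangeRestrict w))) := by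
        have h := congrArg (fun f => f (φ.rangeRestrict w)) ht
        exact h
      rw [he1, he2, ← map_add]
      congr 1
      apply Subtype.ext
      show ((ψ w : ↥p.domain) : X →₀ A) + ((ρ (φ.rangeRestrict w) : ↥Ω₁) : X →₀ A) = y
      have hcoe : ((ψ w : ↥p.domain) : X →₀ A)
          = (w : X →₀ A) - ((ρ (φ.rangeRestrict w) : ↥Ω₁) : X →₀ A) := rfl
      rw [hcoe]
      simp [hw]
    have hP'S : ((insert x I : Set X), p') ∈ S := ⟨rfl, hcompat'⟩
    have hle : m ≤ ((insert x I : Set X), p') := by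
      refine ⟨Set.subset_insert x I, ⟨hdomle, ?_⟩⟩
      intro a b hab
      have hφ0 : φ.rangeRestrict b = 0 := by
        apply Subtype.ext
        show (b : X →₀ A) x = 0
        have hbI : (b : X →₀ A) ∈ Finsupp.supported A A I := by
          have ha2 : (a : X →₀ A) ∈ Ω ⊓ Finsupp.supported A A I := hmS.1 ▸ a.2
          rw [← hab]
          exact (Submodule.mem_inf.1 ha2).2
        exact (Finsupp.mem_supported' _ _).1 hbI x hx
      show p a = s₁ b
      have hs : s₁ b = p.toFun (ψ b) + t (φ.rangeRestrict b) := rfl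
      rw [hs, hφ0, map_zero, add_zero]
      have hψb : ψ b = a := by
        apply Subtype.ext
        show (b : X →₀ A) - ((ρ (φ.rangeRestrict b) : ↥Ω₁) : X →₀ A) = (a : X →₀ A)
        rw [hφ0, map_zero]
        simp [hab]
      rw [hψb]
      rfl
    have hge := hm.2 hP'S hle
    exact hx (hge.1 (Set.mem_insert x I))
  have hdom : m.2.domain = Ω := by
    rw [hmS.1, huniv, Finsupp.supported_univ, inf_top_eq]
  refine ⟨m.2.toFun ∘ₗ LinearMap.codRestrict m.2.domain Ω.subtype (fun w => hdom ▸ w.2), ?_⟩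
  intro ω
  have h := hmS.2 (ω : X →₀ A) (hdom ▸ ω.2) ω.2
  exact h

section Helpers

variable {A : Type} [Ring A]

lemma cApp {X Y Z : ModuleCat.{0} A} (f : X ⟶ Y) (g : Y ⟶ Z) (x : X) :
    (f ≫ g) x = g (f x) := by simp

lemma factor_out {B C D : ModuleCat.{0} A} (g : B ⟶ C) (f : B ⟶ D)
    (hg : Function.Surjective g) (h : ∀ b, g b = 0 → f b = 0) :
    ∃ k : C ⟶ D, g ≫ k = f := by
  have hker : LinearMap.ker g.hom ≤ LinearMap.ker f.hom := by
    intro b hb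
    exact LinearMap.mem_ker.2 (h b (LinearMap.mem_ker.1 hb))
  let e := LinearMap.quotKerEquivOfSurjective g.hom hg
  let k0 : (B ⧸ LinearMap.ker g.hom) →ₗ[A] D :=
    Submodule.liftQ _ f.hom hker
  refine ⟨ModuleCat.ofHom (k0 ∘ₗ (e.symm : C →ₗ[A] _) : C →ₗ[A] D), ?_⟩
  apply ModuleCat.hom_ext
  apply LinearMap.ext
  intro b
  have h1 : e.symm (g b) = Submodule.Quotient.mk b := by
    apply e.injective
    rw [LinearEquiv.apply_symm_apply]
    rfl
  show k0 (e.symm (g b)) = f b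
  rw [h1]
  rfl

lemma factor_in {T B D : ModuleCat.{0} A} (i : T ⟶ B) (hi : Function.Injective i)
    (f : D ⟶ B) (h : ∀ x, ∃ t, i t = f x) : ∃ k : D ⟶ T, k ≫ i = f := by
  have hmem : ∀ x : D, f x ∈ LinearMap.range i.hom := by
    intro x; obtain ⟨t, ht⟩ := h x; exact ⟨t, ht⟩
  let e := LinearEquiv.ofInjective i.hom hi
  let k : D →ₗ[A] T :=
    (e.symm : _ →ₗ[A] T) ∘ₗ LinearMap.codRestrict (LinearMap.range i.hom)
      f.hom hmem
  refine ⟨ModuleCat.ofHom k, ?_⟩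
  apply ModuleCat.hom_ext
  apply LinearMap.ext
  intro x
  show i (e.symm ⟨f x, hmem x⟩) = f x
  have h1 : e (e.symm ⟨f x, hmem x⟩) = ⟨f x, hmem x⟩ := e.apply_symm_apply _
  have h2 : (e (e.symm ⟨f x, hmem x⟩) : B) = i (e.symm ⟨f x, hmem x⟩) := rfl
  rw [← h2, h1]

lemma ses_range_eq_ker {Y B W : ModuleCat.{0} A} {i : Y ⟶ B} {p : B ⟶ W} {w : i ≫ p = 0}
    (hse : (ShortComplex.mk i p w).ShortExact) :
    LinearMap.range i.hom = LinearMap.ker p.hom := by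
  have := hse.exact
  rw [ShortComplex.moduleCat_exact_iff_range_eq_ker] at this
  exact this

lemma isZero_projective {X : ModuleCat.{0} A} (h : IsZero X) : Projective X := by
  constructor
  intro E Y f e he
  exact ⟨0, by rw [h.eq_zero_of_src f]; simp⟩

end Helpers

section LemA

variable {A : Type} [Ring A]

lemma nonzero_map_of_nonsplit {L E' Z B W : ModuleCat.{0} A}
    {i' : L ⟶ E'} {p' : E' ⟶ Z} (asq : IsAlmostSplitSeq i' p')
    (i : L ⟶ B) (p : B ⟶ W) (w : i ≫ p = 0)
    (hse : (ShortComplex.mk i p w).ShortExact)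
    (hnr : ¬ ∃ r : B ⟶ L, i ≫ r = 𝟙 L) :
    ∃ h : Z ⟶ W, h ≠ 0 := by
  obtain ⟨g, hg⟩ := asq.desc_of_not_splitMono B i hnr
  have hgapp : ∀ t : L, g (i' t) = i t := by
    intro t; rw [← cApp i' g t, hg]
  have hp'surj : Function.Surjective p' :=
    (ModuleCat.epi_iff_surjective p').1 asq.shortExact.epi_g
  have hker' := ses_range_eq_ker asq.shortExact
  have hker := ses_range_eq_ker hse
  obtain ⟨h, hh⟩ : ∃ h : Z ⟶ W, p' ≫ h = g ≫ p := by
    apply factor_out p' (g ≫ p) hp'surj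
    intro b hb
    have : b ∈ LinearMap.range i'.hom := by
      rw [hker']; exact LinearMap.mem_ker.2 hb
    obtain ⟨t, rfl⟩ := this
    rw [cApp g p, hgapp t, ← cApp i p, w]
    rfl
  refine ⟨h, ?_⟩
  intro h0
  have hgp : g ≫ p = 0 := by rw [← hh, h0]; simp
  have hiinj : Function.Injective i := (ModuleCat.mono_iff_injective i).1 hse.mono_f
  obtain ⟨k, hk⟩ : ∃ k : E' ⟶ L, k ≫ i = g := by
    apply factor_in i hiinj g
    intro x
    have : g x ∈ LinearMap.ker p.hom := by
      apply LinearMap.mem_ker.2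
      rw [← cApp g p x, hgp]; rfl
    rw [← hker] at this
    obtain ⟨t, ht⟩ := this
    exact ⟨t, ht⟩
  have hki : ∀ l : L, k (i' l) = l := by
    intro l
    apply hiinj
    rw [← cApp k i (i' l), hk, hgapp]
  -- build section of p'
  obtain ⟨z₀, hz₀⟩ : ∃ z₀ : Z ⟶ E', p' ≫ z₀ = 𝟙 E' - (k ≫ i') := by
    apply factor_out p' (𝟙 E' - (k ≫ i')) hp'surj
    intro b hb
    have : b ∈ LinearMap.range i'.hom := by
      rw [hker']; exact LinearMap.mem_ker.2 hb
    obtain ⟨t, rfl⟩ := this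
    show (𝟙 E' - k ≫ i') (i' t) = 0
    have : (𝟙 E' - k ≫ i') (i' t) = i' t - i' (k (i' t)) := by
      show (ModuleCat.Hom.hom _) _ = _
      rw [ModuleCat.hom_sub, LinearMap.sub_apply]
      rw [cApp k i']
      rfl
    rw [this, hki t, sub_self]
  apply asq.not_split
  refine ⟨z₀, ?_⟩
  apply ModuleCat.hom_ext
  apply LinearMap.ext
  intro z
  obtain ⟨b, rfl⟩ := hp'surj z
  have h1 : z₀ (p' b) = (𝟙 E' - k ≫ i') b := by rw [← cApp p' z₀ b, hz₀]
  show p' (z₀ (p' b)) = p' b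
  rw [h1]
  have h2 : (𝟙 E' - k ≫ i') b = b - i' (k b) := by
    show (ModuleCat.Hom.hom _) _ = _
    rw [ModuleCat.hom_sub, LinearMap.sub_apply]
    rw [cApp k i']
    rfl
  rw [h2, map_sub]
  have h3 : p' (i' (k b)) = 0 := by rw [← cApp i' p' (k b), asq.comp_zero]; rfl
  rw [h3, sub_zero]

end LemA

section MainSkeleton

variable {A : Type} [Ring A]

lemma split_of_isZero_right {Y B W : ModuleCat.{0} A} (hW : IsZero W) {i : Y ⟶ B} {p : B ⟶ W}
    {w : i ≫ p = 0} (hse : (ShortComplex.mk i p w).ShortExact) :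
    ∃ r : B ⟶ Y, i ≫ r = 𝟙 Y := by
  have hinj := (ModuleCat.mono_iff_injective i).1 hse.mono_f
  have hsurj : Function.Surjective i := by
    intro b
    have hb : b ∈ LinearMap.ker p.hom := LinearMap.mem_ker.2 (by
      rw [hW.eq_zero_of_tgt p]; rfl)
    rw [← ses_range_eq_ker hse] at hb
    obtain ⟨y, hy⟩ := hb; exact ⟨y, hy⟩
  let e := LinearEquiv.ofBijective i.hom ⟨hinj, hsurj⟩
  refine ⟨ModuleCat.ofHom (e.symm : B →ₗ[A] Y), ?_⟩
  apply ModuleCat.hom_ext; apply LinearMap.ext; intro y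
  show e.symm (i y) = y
  exact e.symm_apply_apply y

lemma split_of_isZero_left {Y B : ModuleCat.{0} A} (hY : IsZero Y) (i : Y ⟶ B) :
    ∃ r : B ⟶ Y, i ≫ r = 𝟙 Y := ⟨0, hY.eq_of_src _ _⟩

lemma iter_indec_or_zero (ar : ARTranslation A) (I : ModuleCat.{0} A) (hI : Indec I) :
    ∀ k, Indec (ar.τ^[k] I) ∨ IsZero (ar.τ^[k] I) := by
  intro k
  induction k with
  | zero => exact Or.inl hI
  | succ n ih =>
    rw [Function.iterate_succ_apply']
    rcases ih with hind | hzero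
    · by_cases hproj : Projective (ar.τ^[n] I)
      · exact Or.inr (ar.τ_proj _ hproj)
      · obtain ⟨E, i, pr, asq⟩ := ar.τ_almost_split _ hind hproj
        exact Or.inl asq.indec_left
    · exact Or.inr (ar.τ_proj _ (isZero_projective hzero))

lemma hom_to_tau_zero (hered : ∀ J : Ideal A, Module.Projective A J)
    {T E X M : ModuleCat.{0} A} {ι : T ⟶ E} {π : E ⟶ X} (asq : IsAlmostSplitSeq ι π)
    (hext : ext1Zero X M) (f : M ⟶ T) : f = 0 := by
  classical
  by_contra hf
  have hπsurj : Function.Surjective π := (ModuleCat.epi_iff_surjective π).1 asq.shortExact.epi_g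
  have hιinj : Function.Injective ι := (ModuleCat.mono_iff_injective ι).1 asq.shortExact.mono_f
  have hkerπ := ses_range_eq_ker asq.shortExact
  -- free presentation of X
  set Fr : ModuleCat.{0} A := ModuleCat.of A (↥X →₀ A) with hFr
  let b : Fr ⟶ X := ModuleCat.ofHom (Finsupp.linearCombination A (id : ↥X → X) : (↥X →₀ A) →ₗ[A] X)
  have hbsingle : ∀ (x : ↥X) (r : A), b (Finsupp.single x r) = r • x := by
    intro x r
    exact Finsupp.linearCombination_single A (v := (id : ↥X → X)) r x
  have hbsurj : Function.Surjective b := by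
    intro x
    exact ⟨Finsupp.single x 1, by rw [hbsingle x 1, one_smul]⟩
  -- lift b through π
  let uc : ↥X → E := fun x => (hπsurj x).choose
  have huc : ∀ x, π (uc x) = x := fun x => (hπsurj x).choose_spec
  let u : Fr ⟶ E := ModuleCat.ofHom (Finsupp.linearCombination A uc : (↥X →₀ A) →ₗ[A] E)
  have husingle : ∀ (x : ↥X) (r : A), u (Finsupp.single x r) = r • uc x := by
    intro x r
    exact Finsupp.linearCombination_single A (v := uc) r x
  have hub : ∀ y : Fr, π (u y) = b y := by
    have : u ≫ π = b := by
      apply ModuleCat.hom_ext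
      apply Finsupp.lhom_ext
      intro x r
      show π (u (Finsupp.single x r)) = b (Finsupp.single x r)
      rw [husingle, hbsingle, map_smul, huc]
    intro y
    rw [← cApp u π y, this]
  -- the kernel Ω
  set Ω : Submodule A (↥X →₀ A) := LinearMap.ker b.hom with hΩ
  set ΩM : ModuleCat.{0} A := ModuleCat.of A ↥Ω with hΩM
  let a : ΩM ⟶ Fr := ModuleCat.ofHom (Ω.subtype : ↥Ω →ₗ[A] (↥X →₀ A))
  have hbω : ∀ ω : ↥Ω, b (a ω) = 0 := fun ω => ω.2
  -- c : ΩM ⟶ T with c ≫ ι = a ≫ u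
  obtain ⟨c, hc⟩ : ∃ c : ΩM ⟶ T, c ≫ ι = a ≫ u := by
    apply factor_in ι hιinj
    intro ω
    have : u (a ω) ∈ LinearMap.ker π.hom := by
      apply LinearMap.mem_ker.2
      rw [hub, hbω]
    rw [← hkerπ] at this
    obtain ⟨t, ht⟩ := this
    exact ⟨t, by rw [ht, cApp a u]⟩
  have hcι : ∀ ω : ↥Ω, ι (c ω) = u (a ω) := by
    intro ω
    rw [← cApp c ι ω, hc, cApp a u]
  -- cokernel of f
  set Mf : Submodule A T := LinearMap.range f.hom with hMf
  set C : ModuleCat.{0} A := ModuleCat.of A (T ⧸ Mf) with hC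
  let q : T ⟶ C := ModuleCat.ofHom (Mf.mkQ : T →ₗ[A] T ⧸ Mf)
  have hqsurj : Function.Surjective q := Submodule.mkQ_surjective Mf
  have hqker : ∀ t : T, q t = 0 ↔ t ∈ Mf := by
    intro t
    rw [show (q t = 0) = (t ∈ LinearMap.ker (Mf.mkQ)) from rfl]
    rw [Submodule.ker_mkQ]
  have hqns : ¬ ∃ rr : C ⟶ T, q ≫ rr = 𝟙 T := by
    rintro ⟨rr, hrr⟩
    apply hf
    have hqinj : Function.Injective q := by
      intro t₁ t₂ h12
      have e1 : rr (q t₁) = t₁ := by rw [← cApp q rr t₁, hrr]; rfl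
      have e2 : rr (q t₂) = t₂ := by rw [← cApp q rr t₂, hrr]; rfl
      rw [← e1, ← e2, h12]
    apply ModuleCat.hom_ext
    apply LinearMap.ext
    intro m
    have : f m ∈ Mf := ⟨m, rfl⟩
    have h0 : q (f m) = 0 := (hqker _).2 this
    have : q (f m) = q 0 := by rw [h0, map_zero]
    exact hqinj this
  obtain ⟨g, hg⟩ := asq.desc_of_not_splitMono C q hqns
  have hgι : ∀ t : T, g (ι t) = q t := by
    intro t; rw [← cApp ι g t, hg]
  -- lift u ≫ g through q
  let wc : ↥X → T := fun x => (hqsurj (g (uc x))).choose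
  have hwc : ∀ x, q (wc x) = g (uc x) := fun x => (hqsurj (g (uc x))).choose_spec
  let wt : Fr ⟶ T := ModuleCat.ofHom (Finsupp.linearCombination A wc : (↥X →₀ A) →ₗ[A] T)
  have hwsingle : ∀ (x : ↥X) (r : A), wt (Finsupp.single x r) = r • wc x := by
    intro x r
    exact Finsupp.linearCombination_single A (v := wc) r x
  have hwq : ∀ y : Fr, q (wt y) = g (u y) := by
    have : wt ≫ q = (u : Fr ⟶ E) ≫ g := by
      apply ModuleCat.hom_ext
      apply Finsupp.lhom_ext
      intro x r
      show q (wt (Finsupp.single x r)) = g (u (Finsupp.single x r))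
      rw [hwsingle, husingle, map_smul, map_smul, hwc]
    intro y
    rw [← cApp wt q y, this, cApp u g]
  -- D := c - a ≫ wt maps into Mf
  have hD : ∀ ω : ↥Ω, c ω - wt (a ω) ∈ Mf := by
    intro ω
    rw [← hqker]
    rw [map_sub, hwq, ← hcι, hgι, sub_self]
  -- apply the Zorn lifting
  have he'surj : Function.Surjective f.hom.rangeRestrict :=
    LinearMap.surjective_rangeRestrict _
  let d : ↥Ω →ₗ[A] ↥Mf :=
    LinearMap.codRestrict Mf (c.hom - wt.hom ∘ₗ a.hom) hD
  obtain ⟨s, hs⟩ := hered_lift hered Ω (f.hom.rangeRestrict) he'surj d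
  have hfs : ∀ ω : ↥Ω, f (s ω) = c ω - wt (a ω) := by
    intro ω
    have h1 := hs ω
    have h2 : (f.hom.rangeRestrict (s ω) : T) = f (s ω) := rfl
    have h3 : ((d ω : ↥Mf) : T) = c ω - wt (a ω) := rfl
    rw [← h2, ← h3, h1]
  -- pushout of the presentation along s
  set R : Submodule A ((↥X →₀ A) × M) :=
    LinearMap.range (LinearMap.prod (Ω.subtype) (-s)) with hR
  set B' : ModuleCat.{0} A := ModuleCat.of A (((↥X →₀ A) × M) ⧸ R) with hB'
  let i₀ : M ⟶ B' := ModuleCat.ofHom (R.mkQ ∘ₗ LinearMap.inr A (↥X →₀ A) M : M →ₗ[A] _)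
  have hRker : R ≤ LinearMap.ker (b.hom ∘ₗ
      LinearMap.fst A (↥X →₀ A) M) := by
    rintro z ⟨ω, rfl⟩
    apply LinearMap.mem_ker.2
    show b ((a ω : (↥X →₀ A))) = 0
    exact hbω ω
  let p₀ : B' ⟶ X := ModuleCat.ofHom (R.liftQ (b.hom ∘ₗ
      LinearMap.fst A (↥X →₀ A) M) hRker : _ →ₗ[A] X)
  have hp₀mk : ∀ z : (↥X →₀ A) × M, p₀ (Submodule.Quotient.mk z) = b z.1 := by
    intro z; rfl
  have hi₀mk : ∀ m : M, i₀ m = Submodule.Quotient.mk ((0 : ↥X →₀ A), m) := by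
    intro m; rfl
  have hw₀ : i₀ ≫ p₀ = 0 := by
    apply ModuleCat.hom_ext
    apply LinearMap.ext
    intro m
    rw [cApp i₀ p₀ m, hi₀mk, hp₀mk]
    show b 0 = 0
    rw [map_zero]
  have hmono : Function.Injective i₀ := by
    intro m₁ m₂ h12
    have : i₀ (m₁ - m₂) = 0 := by rw [map_sub, h12, sub_self]
    rw [hi₀mk] at this
    have hmem : ((0 : ↥X →₀ A), m₁ - m₂) ∈ R :=
      (Submodule.Quotient.mk_eq_zero R).1 this
    obtain ⟨ω, hω⟩ := hmem
    have hω1 : (a ω : (↥X →₀ A)) = 0 := congrArg Prod.fst hω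
    have hω0 : ω = 0 := by
      apply Subtype.ext
      exact hω1
    have hω2 : -s ω = m₁ - m₂ := congrArg Prod.snd hω
    rw [hω0, map_zero, neg_zero] at hω2
    exact sub_eq_zero.1 hω2.symm
  have hepi : Function.Surjective p₀ := by
    intro x
    obtain ⟨y, hy⟩ := hbsurj x
    exact ⟨Submodule.Quotient.mk (y, 0), by rw [hp₀mk]; exact hy⟩
  have hexact : (ShortComplex.mk i₀ p₀ hw₀).Exact := by
    rw [ShortComplex.moduleCat_exact_iff]
    intro z hz
    obtain ⟨⟨y, m⟩, rfl⟩ := Submodule.Quotient.mk_surjective R z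
    have hyb : b y = 0 := by rw [← hp₀mk (y, m)]; exact hz
    have hyΩ : y ∈ Ω := hyb
    refine ⟨m + s ⟨y, hyΩ⟩, ?_⟩
    rw [hi₀mk]
    refine Eq.symm ?_
    rw [Submodule.Quotient.eq]
    have hsub : ((y, m) : (↥X →₀ A) × M) - (0, m + s ⟨y, hyΩ⟩) = (y, -(s ⟨y, hyΩ⟩)) := by
      refine Prod.ext_iff.2 ⟨?_, ?_⟩
      · show y - 0 = y
        rw [sub_zero]
      · show m - (m + s ⟨y, hyΩ⟩) = -(s ⟨y, hyΩ⟩)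
        rw [sub_add_cancel_left]
    rw [hsub]
    exact ⟨⟨y, hyΩ⟩, rfl⟩
  have hse' : (ShortComplex.mk i₀ p₀ hw₀).ShortExact :=
    ShortComplex.ShortExact.mk' hexact ((ModuleCat.mono_iff_injective _).2 hmono)
      ((ModuleCat.epi_iff_surjective _).2 hepi)
  obtain ⟨r₀, hr₀⟩ := hext B' i₀ p₀ hw₀ hse'
  let jF : Fr ⟶ B' := ModuleCat.ofHom (R.mkQ ∘ₗ LinearMap.inl A (↥X →₀ A) M : _ →ₗ[A] _)
  have hjFmk : ∀ y : ↥X →₀ A, jF y = Submodule.Quotient.mk (y, (0 : M)) := fun y => rfl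
  let k : Fr ⟶ M := jF ≫ r₀
  have hr₀i₀ : ∀ m : M, r₀ (i₀ m) = m := by
    intro m; rw [← cApp i₀ r₀ m, hr₀]; rfl
  have hak : ∀ ω : ↥Ω, k (a ω) = s ω := by
    intro ω
    have h1 : jF (a ω) = i₀ (s ω) := by
      rw [hjFmk, hi₀mk, Submodule.Quotient.eq]
      have hsub : (((a ω : ↥X →₀ A), (0 : M)) : (↥X →₀ A) × M) - (0, s ω)
          = ((a ω : ↥X →₀ A), -(s ω)) := by
        refine Prod.ext_iff.2 ⟨?_, ?_⟩
        · show (a ω : ↥X →₀ A) - 0 = (a ω : ↥X →₀ A)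
          rw [sub_zero]
        · show (0 : M) - s ω = -(s ω)
          rw [zero_sub]
      rw [hsub]
      exact ⟨ω, rfl⟩
    show r₀ (jF (a ω)) = s ω
    rw [h1, hr₀i₀]
  let v : Fr ⟶ T := (k ≫ f) + wt
  have hav : ∀ ω : ↥Ω, v (a ω) = c ω := by
    intro ω
    have h1 : v (a ω) = f (k (a ω)) + wt (a ω) := by
      show (ModuleCat.Hom.hom _) _ = _
      rw [ModuleCat.hom_add, LinearMap.add_apply]
      rw [cApp k f]
    rw [h1, hak, hfs, sub_add_cancel]
  obtain ⟨z, hz⟩ : ∃ z : X ⟶ E, b ≫ z = u - (v ≫ ι) := by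
    apply factor_out b (u - v ≫ ι) hbsurj
    intro y hy
    have hyΩ : y ∈ Ω := hy
    have h1 : (u - v ≫ ι) y = u y - ι (v y) := by
      show (ModuleCat.Hom.hom _) _ = _
      rw [ModuleCat.hom_sub, LinearMap.sub_apply]
      rw [cApp v ι]
    rw [h1]
    have h2 : v y = c ⟨y, hyΩ⟩ := hav ⟨y, hyΩ⟩
    rw [h2, hcι]
    show u y - u (a ⟨y, hyΩ⟩) = 0
    rw [show (a ⟨y, hyΩ⟩ : ↥X →₀ A) = y from rfl, sub_self]
  apply asq.not_split
  refine ⟨z, ?_⟩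
  apply ModuleCat.hom_ext
  apply LinearMap.ext
  intro x
  obtain ⟨y, rfl⟩ := hbsurj x
  show π (z (b y)) = b y
  have h1 : z (b y) = (u - v ≫ ι) y := by rw [← cApp b z y, hz]
  rw [h1]
  have h2 : (u - v ≫ ι) y = u y - ι (v y) := by
    show (ModuleCat.Hom.hom _) _ = _
    rw [ModuleCat.hom_sub, LinearMap.sub_apply]; rw [cApp v ι]
  rw [h2, map_sub, hub]
  have h3 : π (ι (v y)) = 0 := by rw [← cApp ι π (v y), asq.comp_zero]; rfl
  rw [h3, sub_zero]


end MainSkeleton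

/-- Let `A` be a finite-dimensional hereditary `K`-algebra.  If
`I_j` and `I_m` are indecomposable injective `A`-modules, then
`Ext¹_A(τ^t I_j, τ^{t-r} I_m) = 0` for all natural numbers `t ≥ r ≥ 0`. -/
theorem ext_vanish_preinjective
    (K : Type) [Field K] [IsAlgClosed K] (A : Type) [Ring A] [Algebra K A]
    [FiniteDimensional K A] (hereditary : ∀ J : Ideal A, Module.Projective A J)
    (ar : ARTranslation A)
    (Ij Im : ModuleCat.{0} A)
    (hIj : CategoryTheory.Injective Ij) (hIji : Indec Ij)
    (hIm : CategoryTheory.Injective Im) (hImi : Indec Im)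
    (t r : ℕ) (htr : r ≤ t) :
    ext1Zero (ar.τ^[t] Ij) (ar.τ^[t - r] Im) := by
  classical
  induction t generalizing r with
  | zero =>
    obtain rfl : r = 0 := Nat.le_zero.1 htr
    simp only [Nat.sub_self, Function.iterate_zero_apply]
    intro B i p w hse
    haveI := hse.mono_f
    obtain ⟨rr, hrr⟩ := hIm.factors (𝟙 Im) i
    exact ⟨rr, hrr⟩
  | succ t ih =>
    rcases Nat.lt_or_ge t r with hge | hle
    · -- r = t + 1
      obtain rfl : r = t + 1 := le_antisymm htr hge
      simp only [Nat.sub_self, Function.iterate_zero_apply]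
      intro B i p w hse
      haveI := hse.mono_f
      obtain ⟨rr, hrr⟩ := hIm.factors (𝟙 Im) i
      exact ⟨rr, hrr⟩
    · -- r ≤ t
      have hZeq : ar.τ^[t+1-r] Im = ar.τ (ar.τ^[t-r] Im) := by
        rw [show t+1-r = (t-r)+1 by omega, Function.iterate_succ_apply']
      have hXeq : ar.τ^[t+1] Ij = ar.τ (ar.τ^[t] Ij) :=
        Function.iterate_succ_apply' ar.τ t Ij
      rw [hZeq, hXeq]
      intro B i p w hse
      by_contra hnos
      by_cases hz1 : IsZero (ar.τ (ar.τ^[t] Ij))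
      · exact hnos (split_of_isZero_right hz1 hse)
      by_cases hz2 : IsZero (ar.τ (ar.τ^[t-r] Im))
      · exact hnos (split_of_isZero_left hz2 i)
      have hXind : Indec (ar.τ^[t] Ij) := by
        rcases iter_indec_or_zero ar Ij hIji t with h | h
        · exact h
        · exact absurd (ar.τ_proj _ (isZero_projective h)) hz1
      have hXproj : ¬ Projective (ar.τ^[t] Ij) := fun hp => hz1 (ar.τ_proj _ hp)
      have hZind : Indec (ar.τ^[t-r] Im) := by
        rcases iter_indec_or_zero ar Im hImi (t-r) with h | h
        · exact h
        · exact absurd (ar.τ_proj _ (isZero_projective h)) hz2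
      have hZproj : ¬ Projective (ar.τ^[t-r] Im) := fun hp => hz2 (ar.τ_proj _ hp)
      obtain ⟨EX, ιX, πX, asqX⟩ := ar.τ_almost_split _ hXind hXproj
      obtain ⟨EZ, ιZ, πZ, asqZ⟩ := ar.τ_almost_split _ hZind hZproj
      obtain ⟨h, hh0⟩ := nonzero_map_of_nonsplit asqZ i p w hse hnos
      exact hh0 (hom_to_tau_zero hereditary asqX (ih r hle) h)
end

section
/- Let B be a finite-dimensional K-algebra and let 0 → L → X ⊕ Y → M → 0 be an almost split sequence in mod B, with left map (f', g')^t (f': L → X, g': L → Y) and right map (f, g) (f: X → M, g: Y → M). Then: (1) if f' is a monomorphism (respectively, an epimorphism), then g is a monomorphism (respectively, an epimorphism); (2) if g' is a monomorphism (respectively, an epimorphism), then f is a monomorphism (respectively, an epimorphism). -/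
open CategoryTheory CategoryTheory.Limits

lemma aux_biprod {B : Type} [Ring B] {L X Y M : ModuleCat.{0} B}
    (f' : L ⟶ X) (g' : L ⟶ Y) (f : X ⟶ M) (g : Y ⟶ M)
    (w : biprod.lift f' g' ≫ biprod.desc f g = 0)
    (hse : (ShortComplex.mk (biprod.lift f' g') (biprod.desc f g) w).ShortExact) :
    (Mono f' → Mono g) ∧ (Epi f' → Epi g) := by
  have ap : ∀ {P Q R : ModuleCat.{0} B} (u : P ⟶ Q) (v : Q ⟶ R) (x : P),
      (u ≫ v) x = v (u x) := fun _ _ _ => rfl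
  have hex := (ShortComplex.moduleCat_exact_iff _).mp hse.exact
  constructor
  · intro hf'
    have hf'inj := (ModuleCat.mono_iff_injective f').mp hf'
    rw [ModuleCat.mono_iff_injective, injective_iff_map_eq_zero]
    intro y hy
    set e := (biprod.inr : Y ⟶ X ⊞ Y) y with he
    have hpe : (biprod.desc f g) e = 0 := by
      have := ConcreteCategory.congr_hom (biprod.inr_desc f g) y
      rw [ap] at this; rw [this, hy]
    obtain ⟨l, hl⟩ := hex e hpe
    have hl' : (biprod.lift f' g') l = e := hl
    have hfl : f' l = 0 := by
      have h1 := ConcreteCategory.congr_hom (biprod.lift_fst f' g') l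
      rw [ap] at h1
      have h2 := ConcreteCategory.congr_hom (biprod.inr_fst (X := X) (Y := Y)) y
      rw [ap] at h2
      rw [← h1, hl', h2]; rfl
    have hl0 : l = 0 := (injective_iff_map_eq_zero f'.hom).mp hf'inj l hfl
    have he0 : e = 0 := by rw [← hl', hl0, map_zero]
    have h3 : (biprod.snd : X ⊞ Y ⟶ Y) e = y := by
      rw [he, ← ap, biprod.inr_snd]; rfl
    rw [← h3, he0, map_zero]
  · intro hf'
    have hf'sur := (ModuleCat.epi_iff_surjective f').mp hf'
    have hpsur := (ModuleCat.epi_iff_surjective _).mp hse.epi_g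
    rw [ModuleCat.epi_iff_surjective]
    intro m
    obtain ⟨e, hpe⟩ := hpsur m
    have hpe : (biprod.desc f g) e = m := hpe
    obtain ⟨l, hl⟩ := hf'sur ((biprod.fst : X ⊞ Y ⟶ X) e)
    refine ⟨(biprod.snd : X ⊞ Y ⟶ Y) e - g' l, ?_⟩
    have htot : ∀ z : ↑(X ⊞ Y), z = (biprod.inl : X ⟶ X ⊞ Y) ((biprod.fst : X ⊞ Y ⟶ X) z)
        + (biprod.inr : Y ⟶ X ⊞ Y) ((biprod.snd : X ⊞ Y ⟶ Y) z) := by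
      intro z
      calc z = (𝟙 (X ⊞ Y)) z := rfl
        _ = ((biprod.fst ≫ biprod.inl + biprod.snd ≫ biprod.inr :
                X ⊞ Y ⟶ X ⊞ Y)) z := by rw [biprod.total]
        _ = _ := rfl
    have hpform : ∀ z : ↑(X ⊞ Y), (biprod.desc f g) z
        = f ((biprod.fst : X ⊞ Y ⟶ X) z) + g ((biprod.snd : X ⊞ Y ⟶ Y) z) := by
      intro z
      conv_lhs => rw [htot z]
      rw [map_add]
      have h1 := ConcreteCategory.congr_hom (biprod.inl_desc f g) ((biprod.fst : X ⊞ Y ⟶ X) z)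
      have h2 := ConcreteCategory.congr_hom (biprod.inr_desc f g) ((biprod.snd : X ⊞ Y ⟶ Y) z)
      rw [ap] at h1 h2
      rw [h1, h2]
    have hlift : ∀ x : L, (biprod.lift f' g') x = (biprod.inl : X ⟶ X ⊞ Y) (f' x)
        + (biprod.inr : Y ⟶ X ⊞ Y) (g' x) := by
      intro x
      have h5 := ConcreteCategory.congr_hom (biprod.lift_fst f' g') x
      have h6 := ConcreteCategory.congr_hom (biprod.lift_snd f' g') x
      rw [ap] at h5 h6
      conv_lhs => rw [htot ((biprod.lift f' g') x)]
      rw [h5, h6]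
    have hzero : f (f' l) + g (g' l) = 0 := by
      have hw := ConcreteCategory.congr_hom w l
      rw [ap, hlift l, map_add] at hw
      have h1 := ConcreteCategory.congr_hom (biprod.inl_desc f g) (f' l)
      have h2 := ConcreteCategory.congr_hom (biprod.inr_desc f g) (g' l)
      rw [ap] at h1 h2
      rw [h1, h2] at hw
      simpa using hw
    rw [map_sub]
    have hform := hpform e
    rw [hpe] at hform
    rw [hl] at hzero
    -- hform : m = f (fst e) + g (snd e); hzero : f (fst e) + g (g' l) = 0
    have h10 : g ((biprod.snd : X ⊞ Y ⟶ Y) e) - g (g' l)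
        = (f ((biprod.fst : X ⊞ Y ⟶ X) e) + g ((biprod.snd : X ⊞ Y ⟶ Y) e))
          - (f ((biprod.fst : X ⊞ Y ⟶ X) e) + g (g' l)) := by abel
    rw [h10, ← hform, hzero, sub_zero]

/-- Let `B` be a finite-dimensional `K`-algebra and
`0 → L → X ⊕ Y → M → 0` an almost split sequence in `mod B` with left map
`(f', g')ᵗ` and right map `(f, g)`.  Then (1) if `f'` is a monomorphism
(resp. epimorphism) then `g` is a monomorphism (resp. epimorphism); (2) if `g'`
is a monomorphism (resp. epimorphism) then `f` is a monomorphism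
(resp. epimorphism). -/
theorem almost_split_biprod_mono_epi
    (K : Type) [Field K] (B : Type) [Ring B] [Algebra K B] [FiniteDimensional K B]
    (L X Y M : ModuleCat.{0} B)
    (f' : L ⟶ X) (g' : L ⟶ Y) (f : X ⟶ M) (g : Y ⟶ M)
    (h : IsAlmostSplitSeq (CategoryTheory.Limits.biprod.lift f' g')
      (CategoryTheory.Limits.biprod.desc f g)) :
    ((CategoryTheory.Mono f' → CategoryTheory.Mono g) ∧
     (CategoryTheory.Epi f' → CategoryTheory.Epi g)) ∧
    ((CategoryTheory.Mono g' → CategoryTheory.Mono f) ∧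
     (CategoryTheory.Epi g' → CategoryTheory.Epi f)) := by
  constructor
  · exact aux_biprod f' g' f g h.comp_zero h.shortExact
  · have w := h.comp_zero
    rw [biprod.lift_desc] at w
    have w' : biprod.lift g' f' ≫ biprod.desc g f = 0 := by
      rw [biprod.lift_desc, add_comm]; exact w
    have e : (ShortComplex.mk (biprod.lift f' g') (biprod.desc f g) h.comp_zero) ≅
        (ShortComplex.mk (biprod.lift g' f') (biprod.desc g f) w') :=
      ShortComplex.isoMk (Iso.refl L) (biprod.braiding X Y) (Iso.refl M)
        (by apply biprod.hom_ext <;> simp) (by apply biprod.hom_ext' <;> simp)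
    exact aux_biprod g' f' g f w' (ShortComplex.shortExact_of_iso e h.shortExact)
end
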